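/- arXiv:1704.02909 — 3 statements merged into one kernel-verified Lean document; each statement's English description precedes it below -/
import Mathlib

section
/- There exists a constant C_Γ > 0, depending only on the Schottky data, such that for all nonempty words 𝐚, 𝐛 ∈ W° with 𝐚 ⇝ 𝐛: C_Γ^{-1} |I_𝐚| · |I_𝐛| ≤ |I_{𝐚'𝐛}| ≤ C_Γ |I_𝐚| · |I_𝐛|. -/
open MeasureTheory Set Real Pointwise

noncomputable section

abbrev SL2 := Matrix.SpecialLinearGroup (Fin 2) ℝ

/-- The Möbius transformation of `ℝ` associated to `g ∈ SL(2,ℝ)` (junk value at the pole). -/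
def mobius (g : SL2) (x : ℝ) : ℝ :=
  (g 0 0 * x + g 0 1) / (g 1 0 * x + g 1 1)

/-- The derivative `γ'(x) = (cx+d)⁻²` of the Möbius transformation. -/
def mobiusDeriv (g : SL2) (x : ℝ) : ℝ :=
  ((g 1 0 * x + g 1 1) ^ 2)⁻¹

/-- The derivative of the Möbius transformation in the ball model,
`|γ'(x)|_B = ((1+x²)/(1+γ(x)²)) γ'(x)`. -/
def mobiusDerivB (g : SL2) (x : ℝ) : ℝ :=
  ((1 + x ^ 2) / (1 + mobius g x ^ 2)) * mobiusDeriv g x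

/-- The Möbius action of `SL(2,ℝ)` on `ℝ ∪ {∞}`. -/
def mobiusOP (g : SL2) (x : OnePoint ℝ) : OnePoint ℝ :=
  Option.elim x
    (if g 1 0 = 0 then OnePoint.infty else ((g 0 0 / g 1 0 : ℝ) : OnePoint ℝ))
    (fun y => if g 1 0 * y + g 1 1 = 0 then OnePoint.infty
      else ((mobius g y : ℝ) : OnePoint ℝ))

/-- The pole `γ⁻¹(∞) = -d/c` of `γ = [[a,b],[c,d]]`. -/
def mobiusPole (g : SL2) : ℝ := -(g 1 1) / (g 1 0)

/-- The distortion factor `α(γ, [x₀,x₁]) = log((γ⁻¹(∞) − x₁)/(γ⁻¹(∞) − x₀))`,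
with the convention `α = 0` when `γ⁻¹(∞) = ∞` (i.e. `c = 0`). -/
def alphaDist (g : SL2) (x₀ x₁ : ℝ) : ℝ :=
  if g 1 0 = 0 then 0 else Real.log ((mobiusPole g - x₁) / (mobiusPole g - x₀))

/-- The letter `ā` paired with `a` in the alphabet `{1,…,2r}` (modelled by `Fin (2r)`). -/
def bar {r : ℕ} (a : Fin (2 * r)) : Fin (2 * r) :=
  if h : (a : ℕ) < r then ⟨(a : ℕ) + r, by omega⟩
  else ⟨(a : ℕ) - r, by have := a.isLt; omega⟩

/-- Schottky data: `2r` disjoint compact intervals `I_a = [ξ₀ a, ξ₁ a]` on the real line and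
transformations `γ_a ∈ SL(2,ℝ)` with `γ_ā = γ_a⁻¹` such that `γ_a` maps the complement (in
`ℝ ∪ {∞}`) of the interior of `I_ā` onto `I_a`. -/
structure SchottkyData (r : ℕ) where
  hr : 2 ≤ r
  ξ₀ : Fin (2 * r) → ℝ
  ξ₁ : Fin (2 * r) → ℝ
  hlt : ∀ a, ξ₀ a < ξ₁ a
  hdisj : ∀ a b, a ≠ b → Disjoint (Icc (ξ₀ a) (ξ₁ a)) (Icc (ξ₀ b) (ξ₁ b))
  γ : Fin (2 * r) → SL2
  hinv : ∀ a, γ (bar a) = (γ a)⁻¹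
  hmap : ∀ a, mobiusOP (γ a) ''
      (univ \ ((fun t : ℝ => (t : OnePoint ℝ)) '' Ioo (ξ₀ (bar a)) (ξ₁ (bar a))))
      = (fun t : ℝ => (t : OnePoint ℝ)) '' Icc (ξ₀ a) (ξ₁ a)

namespace SchottkyData

variable {r : ℕ}

/-- `l` is a word: no letter is followed by its bar. -/
def IsWord (_ : SchottkyData r) (l : List (Fin (2 * r))) : Prop :=
  l.Chain' fun p q => q ≠ bar p

/-- The group element `γ_𝐚 = γ_{a_1} ⋯ γ_{a_n}` of a word. -/
def wordγ (S : SchottkyData r) (l : List (Fin (2 * r))) : SL2 :=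
  (l.map S.γ).prod

/-- The interval `I_𝐚 = γ_{𝐚'}(I_{a_n})` of a nonempty word (and `∅` for the empty word). -/
def wordI (S : SchottkyData r) (l : List (Fin (2 * r))) : Set ℝ :=
  if h : l = [] then ∅
  else mobius (S.wordγ l.dropLast) '' Icc (S.ξ₀ (l.getLast h)) (S.ξ₁ (l.getLast h))

/-- The limit set `Λ_Γ = ⋂_n ⋃_{𝐚 ∈ W_n} I_𝐚`. -/
def limitSet (S : SchottkyData r) : Set ℝ :=
  ⋂ n : ℕ, ⋃ (l : List (Fin (2 * r))) (_ : S.IsWord l ∧ l.length = n + 1), S.wordI l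

/-- `μ` is the (δ-conformal) Patterson–Sullivan measure: a Borel probability measure
supported on the limit set satisfying the equivariance property under the group
generated by the Schottky transformations. -/
def IsPS (S : SchottkyData r) (δ : ℝ) (μ : Measure ℝ) : Prop :=
  IsProbabilityMeasure μ ∧ μ S.limitSetᶜ = 0 ∧
    ∀ g ∈ Subgroup.closure (Set.range S.γ), ∀ f : ℝ → ℝ, Measurable f →
      (∃ C, ∀ x, |f x| ≤ C) →
      ∫ x, f x ∂μ = ∫ x, f (mobius g x) * mobiusDerivB g x ^ δ ∂μ

/-- The partition `Z(τ) = {𝐚 ∈ W° : |I_𝐚| ≤ τ < |I_{𝐚'}|}` (with `|I_∅| = ∞`). -/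
def Zpart (S : SchottkyData r) (τ : ℝ) : Set (List (Fin (2 * r))) :=
  {l | S.IsWord l ∧ l ≠ [] ∧ (MeasureTheory.volume (S.wordI l)).toReal ≤ τ ∧
    (l.dropLast = [] ∨ τ < (MeasureTheory.volume (S.wordI l.dropLast)).toReal)}

end SchottkyData

/-- The length `|I|` of an interval `I ⊂ ℝ`. -/
def ivlen (I : Set ℝ) : ℝ := (MeasureTheory.volume I).toReal

/-- `𝐚 ⇝ 𝐛` : the last letter of `𝐚` equals the first letter of `𝐛`. -/
def chn {X : Type*} (l m : List X) : Prop :=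
  ∃ (h1 : l ≠ []) (h2 : m ≠ []), l.getLast h1 = m.head h2

/-- The center of an interval. -/
def ctr (I : Set ℝ) : ℝ := (sInf I + sSup I) / 2

end

noncomputable section

open MeasureTheory Set Real

def qd (g : SL2) (x : ℝ) : ℝ := g 1 0 * x + g 1 1

lemma det1 (g : SL2) : g 0 0 * g 1 1 - g 0 1 * g 1 0 = 1 := by
  have := g.2
  rwa [Matrix.det_fin_two] at this

lemma mul_ent (g h : SL2) (i j : Fin 2) :
    (g * h) i j = g i 0 * h 0 j + g i 1 * h 1 j := by
  show (↑(g * h) : Matrix (Fin 2) (Fin 2) ℝ) i j = _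
  rw [Matrix.SpecialLinearGroup.coe_mul, Matrix.mul_apply, Fin.sum_univ_two]

lemma one_ent : ((1 : SL2) 0 0 = 1 ∧ (1 : SL2) 0 1 = 0) ∧ (1 : SL2) 1 0 = 0 ∧ (1 : SL2) 1 1 = 1 := by
  refine ⟨⟨?_, ?_⟩, ?_, ?_⟩ <;> simp

lemma inv_ent (g : SL2) : (g⁻¹) 0 0 = g 1 1 ∧ (g⁻¹) 0 1 = -g 0 1 ∧ (g⁻¹) 1 0 = -g 1 0 ∧ (g⁻¹) 1 1 = g 0 0 := by
  have h : (↑(g⁻¹) : Matrix (Fin 2) (Fin 2) ℝ) = Matrix.adjugate ↑g :=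
    Matrix.SpecialLinearGroup.coe_inv g
  rw [Matrix.adjugate_fin_two] at h
  refine ⟨?_, ?_, ?_, ?_⟩ <;> · show (↑(g⁻¹) : Matrix (Fin 2) (Fin 2) ℝ) _ _ = _; rw [h]; simp

lemma qd_mul (g h : SL2) (x : ℝ) (hh : qd h x ≠ 0) :
    qd (g * h) x = qd g (mobius h x) * qd h x := by
  unfold qd mobius at *
  rw [mul_ent, mul_ent]
  field_simp
  ring

lemma num_mul (g h : SL2) (x : ℝ) (hh : qd h x ≠ 0) :
    (g * h) 0 0 * x + (g * h) 0 1 = (g 0 0 * mobius h x + g 0 1) * qd h x := by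
  unfold qd mobius at *
  rw [mul_ent, mul_ent]
  field_simp
  ring

lemma mobius_mul (g h : SL2) (x : ℝ) (hh : qd h x ≠ 0) :
    mobius (g * h) x = mobius g (mobius h x) := by
  have h1 := qd_mul g h x hh
  have h2 := num_mul g h x hh
  unfold qd at h1 h2 hh
  unfold mobius
  rw [h1, h2, mul_div_mul_right _ _ hh]
  rfl


lemma mobiusOP_infty (g : SL2) : mobiusOP g OnePoint.infty
    = if g 1 0 = 0 then OnePoint.infty else (((g 0 0 / g 1 0 : ℝ)) : OnePoint ℝ) := rfl

lemma mobiusOP_coe (g : SL2) (y : ℝ) : mobiusOP g ((y : ℝ) : OnePoint ℝ)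
    = if g 1 0 * y + g 1 1 = 0 then OnePoint.infty
      else ((mobius g y : ℝ) : OnePoint ℝ) := rfl

lemma mobiusOP_mul (g h : SL2) (x : OnePoint ℝ) :
    mobiusOP (g * h) x = mobiusOP g (mobiusOP h x) := by
  have det_h := det1 h
  have det_g := det1 g
  cases x with
  | infty =>
    rw [mobiusOP_infty]
    by_cases hc : h 1 0 = 0
    · have ha : h 0 0 ≠ 0 := by
        intro h0; rw [h0, hc] at det_h; norm_num at det_h
      have hgh10 : (g * h) 1 0 = g 1 0 * h 0 0 := by rw [mul_ent, hc]; ring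
      have hgh00 : (g * h) 0 0 = g 0 0 * h 0 0 := by rw [mul_ent, hc]; ring
      rw [mobiusOP_infty, if_pos hc, mobiusOP_infty]
      by_cases hgc : g 1 0 = 0
      · rw [if_pos (by rw [hgh10, hgc]; ring), if_pos hgc]
      · rw [if_neg (by rw [hgh10]; exact mul_ne_zero hgc ha), if_neg hgc,
          hgh00, hgh10, mul_div_mul_right _ _ ha]
    · rw [mobiusOP_infty, if_neg hc, mobiusOP_coe]
      have hq : g 1 0 * (h 0 0 / h 1 0) + g 1 1 = ((g * h) 1 0) / h 1 0 := by
        rw [mul_ent]; field_simp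
      by_cases hz : (g * h) 1 0 = 0
      · rw [if_pos hz, if_pos (by rw [hq, hz]; simp)]
      · rw [if_neg hz, if_neg (by rw [hq]; exact div_ne_zero hz hc)]
        congr 1
        unfold mobius
        rw [hq, mul_ent]
        field_simp
  | coe y =>
    show mobiusOP (g * h) ((y : ℝ) : OnePoint ℝ) = mobiusOP g (mobiusOP h ((y : ℝ) : OnePoint ℝ))
    rw [mobiusOP_coe, mobiusOP_coe]
    by_cases hqy : h 1 0 * y + h 1 1 = 0
    · have hny : h 0 0 * y + h 0 1 ≠ 0 := by
        intro h0
        have e1 : (h 0 0 * y + h 0 1) * h 1 0 - (h 1 0 * y + h 1 1) * h 0 0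
            = -(h 0 0 * h 1 1 - h 0 1 * h 1 0) := by ring
        rw [h0, hqy, det_h] at e1; norm_num at e1
      have hrw : h 1 1 = -(h 1 0 * y) := by linarith
      have hqgh : (g * h) 1 0 * y + (g * h) 1 1 = g 1 0 * (h 0 0 * y + h 0 1) := by
        rw [mul_ent, mul_ent, hrw]; ring
      have hngh : (g * h) 0 0 * y + (g * h) 0 1 = g 0 0 * (h 0 0 * y + h 0 1) := by
        rw [mul_ent, mul_ent, hrw]; ring
      rw [if_pos hqy, mobiusOP_infty]
      by_cases hgc : g 1 0 = 0
      · rw [if_pos (by rw [hqgh, hgc]; ring), if_pos hgc]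
      · rw [if_neg (by rw [hqgh]; exact mul_ne_zero hgc hny), if_neg hgc]
        congr 1
        unfold mobius
        rw [hqgh, hngh, mul_div_mul_right _ _ hny]
    · have h1 := qd_mul g h y hqy
      unfold qd at h1
      rw [if_neg hqy, mobiusOP_coe]
      by_cases hz : g 1 0 * mobius h y + g 1 1 = 0
      · rw [if_pos (by rw [h1, hz]; ring), if_pos hz]
      · rw [if_neg (by rw [h1]; exact mul_ne_zero hz hqy), if_neg hz]
        congr 1
        exact mobius_mul g h y hqy


open Set MeasureTheory

lemma qd_cont (g : SL2) : Continuous (qd g) := by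
  unfold qd; continuity

lemma qd_sign (g : SL2) {x0 x1 : ℝ} (hq : ∀ x ∈ Icc x0 x1, qd g x ≠ 0)
    {x y : ℝ} (hx : x ∈ Icc x0 x1) (hy : y ∈ Icc x0 x1) : 0 < qd g x * qd g y := by
  rcases lt_trichotomy (qd g x * qd g y) 0 with h | h | h
  · exfalso
    have hsub : uIcc x y ⊆ Icc x0 x1 := uIcc_subset_Icc hx hy
    have h0 : (0 : ℝ) ∈ uIcc (qd g x) (qd g y) := by
      rcases mul_neg_iff.1 h with ⟨h1, h2⟩ | ⟨h1, h2⟩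
      · exact Set.mem_uIcc.2 (Or.inr ⟨le_of_lt h2, le_of_lt h1⟩)
      · exact Set.mem_uIcc.2 (Or.inl ⟨le_of_lt h1, le_of_lt h2⟩)
    obtain ⟨z, hz, hz0⟩ := intermediate_value_uIcc ((qd_cont g).continuousOn) h0
    exact hq z (hsub hz) hz0
  · exfalso
    rcases mul_eq_zero.1 h with h | h
    · exact hq x hx h
    · exact hq y hy h
  · exact h

lemma mobius_sub (g : SL2) {x y : ℝ} (hx : qd g x ≠ 0) (hy : qd g y ≠ 0) :
    mobius g y - mobius g x = (y - x) / (qd g x * qd g y) := by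
  have d := det1 g
  unfold mobius qd at *
  rw [div_sub_div _ _ hy hx]
  rw [show (g 1 0 * y + g 1 1) * (g 1 0 * x + g 1 1) = (g 1 0 * x + g 1 1) * (g 1 0 * y + g 1 1) by ring]
  congr 1
  linear_combination (y - x) * d

lemma mobius_contOn (g : SL2) {s : Set ℝ} (hq : ∀ x ∈ s, qd g x ≠ 0) :
    ContinuousOn (mobius g) s := by
  apply ContinuousOn.div
  · fun_prop
  · exact (qd_cont g).continuousOn
  · exact hq

lemma mobius_image_Icc (g : SL2) {x0 x1 : ℝ} (hle : x0 ≤ x1)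
    (hq : ∀ x ∈ Icc x0 x1, qd g x ≠ 0) :
    mobius g '' Icc x0 x1 = Icc (mobius g x0) (mobius g x1) := by
  have hmono : ∀ x ∈ Icc x0 x1, ∀ y ∈ Icc x0 x1, x ≤ y → mobius g x ≤ mobius g y := by
    intro x hx y hy hxy
    have := qd_sign g hq hx hy
    have := mobius_sub g (hq x hx) (hq y hy)
    nlinarith [div_nonneg (sub_nonneg.2 hxy) (le_of_lt (qd_sign g hq hx hy))]
  apply Subset.antisymm
  · rintro _ ⟨x, hx, rfl⟩
    exact ⟨hmono x0 (left_mem_Icc.2 hle) x hx hx.1, hmono x hx x1 (right_mem_Icc.2 hle) hx.2⟩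
  · exact intermediate_value_Icc hle (mobius_contOn g hq)

lemma mobius_len (g : SL2) {x0 x1 : ℝ} (hle : x0 ≤ x1)
    (hq : ∀ x ∈ Icc x0 x1, qd g x ≠ 0) :
    (volume (mobius g '' Icc x0 x1)).toReal = (x1 - x0) / (qd g x0 * qd g x1) := by
  have h0 : x0 ∈ Icc x0 x1 := left_mem_Icc.2 hle
  have h1 : x1 ∈ Icc x0 x1 := right_mem_Icc.2 hle
  have hs := qd_sign g hq h0 h1
  have hd := mobius_sub g (hq x0 h0) (hq x1 h1)
  rw [mobius_image_Icc g hle hq, Real.volume_Icc, ENNReal.toReal_ofReal]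
  · rw [hd]
  · rw [hd]
    exact div_nonneg (by linarith) hs.le


namespace SchottkyData

variable {r : ℕ} (S : SchottkyData r)

lemma bar_bar (a : Fin (2 * r)) : bar (bar a) = a := by
  have ha := a.isLt
  by_cases h : (a : ℕ) < r
  · have hb : bar a = ⟨(a:ℕ) + r, by omega⟩ := by rw [bar, dif_pos h]
    rw [hb, bar, dif_neg (show ¬(((⟨(a:ℕ) + r, by omega⟩ : Fin (2*r)):ℕ) < r) by simp)]
    apply Fin.ext
    show (a:ℕ) + r - r = a
    omega
  · have hb : bar a = ⟨(a:ℕ) - r, by omega⟩ := by rw [bar, dif_neg h]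
    rw [hb, bar, dif_pos (show (((⟨(a:ℕ) - r, by omega⟩ : Fin (2*r)):ℕ) < r) by simp; omega)]
    apply Fin.ext
    show (a:ℕ) - r + r = a
    omega

lemma isWord_reverse_bar {l : List (Fin (2 * r))} (hl : S.IsWord l) :
    S.IsWord ((l.map bar).reverse) := by
  unfold IsWord at *
  unfold List.Chain' at *; rw [List.isChain_reverse, List.isChain_map]
  refine hl.imp ?_
  intro a b hab
  show bar a ≠ bar (bar b)
  rw [bar_bar]
  exact Ne.symm hab

lemma wordγ_reverse_bar (l : List (Fin (2 * r))) :
    S.wordγ ((l.map bar).reverse) = (S.wordγ l)⁻¹ := by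
  unfold wordγ
  rw [List.prod_inv_reverse, List.map_reverse, List.map_map, List.map_map]
  congr 2
  exact List.map_congr_left (fun a _ => S.hinv a)

lemma wordγ_append (u v : List (Fin (2 * r))) :
    S.wordγ (u ++ v) = S.wordγ u * S.wordγ v := by
  unfold wordγ
  rw [List.map_append, List.prod_append]

lemma Qmain {l : List (Fin (2 * r))} (hw : S.IsWord l) (hl : l ≠ []) :
    ∀ X : OnePoint ℝ,
      X ∉ (fun t : ℝ => (t : OnePoint ℝ)) ''
        Ioo (S.ξ₀ (bar (l.getLast hl))) (S.ξ₁ (bar (l.getLast hl))) →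
      mobiusOP (S.wordγ l) X ∈
        (fun t : ℝ => (t : OnePoint ℝ)) '' Icc (S.ξ₀ (l.head hl)) (S.ξ₁ (l.head hl)) := by
  induction l with
  | nil => exact absurd rfl hl
  | cons a t ih =>
    cases t with
    | nil =>
      intro X hX
      have hγ : S.wordγ [a] = S.γ a := by
        unfold wordγ; simp
      rw [hγ]
      have : X ∈ univ \ ((fun t : ℝ => (t : OnePoint ℝ)) ''
          Ioo (S.ξ₀ (bar a)) (S.ξ₁ (bar a))) := ⟨mem_univ X, hX⟩
      have h2 := Set.mem_image_of_mem (mobiusOP (S.γ a)) this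
      rw [S.hmap a] at h2
      exact h2
    | cons b t' =>
      intro X hX
      obtain ⟨hab, hwt⟩ := List.isChain_cons_cons.mp hw
      have htne : b :: t' ≠ [] := List.cons_ne_nil _ _
      have hγ : S.wordγ (a :: b :: t') = S.γ a * S.wordγ (b :: t') := by
        unfold wordγ; rw [List.map_cons, List.prod_cons]
      have hgl : (a :: b :: t').getLast hl = (b :: t').getLast htne :=
        List.getLast_cons htne
      rw [hγ, mobiusOP_mul]
      have hIH := ih hwt htne X (by rwa [hgl] at hX)
      obtain ⟨y, hy, hyeq⟩ := hIH
      rw [← hyeq]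
      have hynot : ((y : ℝ) : OnePoint ℝ) ∉ (fun t : ℝ => (t : OnePoint ℝ)) ''
          Ioo (S.ξ₀ (bar a)) (S.ξ₁ (bar a)) := by
        rintro ⟨z, hz, hzeq⟩
        have : z = y := OnePoint.coe_injective hzeq
        subst this
        have hdj := S.hdisj ((b :: t').head htne) (bar a) hab
        exact absurd (mem_of_mem_of_subset hz Ioo_subset_Icc_self)
          (fun hmem => (Set.disjoint_left.1 hdj) hy hmem)
      have : ((y : ℝ) : OnePoint ℝ) ∈ univ \ ((fun t : ℝ => (t : OnePoint ℝ)) ''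
          Ioo (S.ξ₀ (bar a)) (S.ξ₁ (bar a))) := ⟨mem_univ _, hynot⟩
      have h2 := Set.mem_image_of_mem (mobiusOP (S.γ a)) this
      rw [S.hmap a] at h2
      exact h2

lemma keyA {l : List (Fin (2 * r))} (hw : S.IsWord l) (hl : l ≠ []) {x : ℝ}
    (hx : x ∈ Icc (S.ξ₀ (l.getLast hl)) (S.ξ₁ (l.getLast hl))) :
    qd (S.wordγ l.dropLast) x ≠ 0 ∧
    mobius (S.wordγ l.dropLast) x ∈ Icc (S.ξ₀ (l.head hl)) (S.ξ₁ (l.head hl)) := by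
  by_cases hd : l.dropLast = []
  · have hsing : l = [l.getLast hl] := by
      conv_lhs => rw [← List.dropLast_append_getLast hl]
      rw [hd]; rfl
    have hhead : l.head hl = l.getLast hl := by
      have := hsing
      cases l with
      | nil => exact absurd rfl hl
      | cons a t =>
        have hlen := congrArg List.length hsing
        simp at hlen
        subst hlen
        rfl
    rw [hd]
    have hq1 : ∀ y : ℝ, qd (S.wordγ []) y = 1 := by
      intro y
      unfold wordγ qd
      simp
    have hm1 : mobius (S.wordγ []) x = x := by
      unfold wordγ mobius
      simp
    refine ⟨by rw [hq1]; norm_num, ?_⟩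
    rw [hm1, hhead]
    exact hx
  · have hpref : S.IsWord l.dropLast := hw.prefix (List.dropLast_prefix l)
    have happ : l.dropLast ++ [l.getLast hl] = l := List.dropLast_append_getLast hl
    have hlast_ne : l.getLast hl ≠ bar (l.dropLast.getLast hd) := by
      have hw2 : List.Chain' (fun p q => q ≠ bar p) (l.dropLast ++ [l.getLast hl]) := by
        rw [happ]; exact hw
      unfold List.Chain' at hw2; rw [List.isChain_append] at hw2
      exact hw2.2.2 _ (by rw [List.getLast?_eq_getLast hd]; rfl) _ rfl
    have hhead : l.dropLast.head hd = l.head hl := by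
      cases l with
      | nil => exact absurd rfl hl
      | cons a t =>
        cases t with
        | nil => exact absurd rfl hd
        | cons b t' => rfl
    have hxnot : ((x : ℝ) : OnePoint ℝ) ∉ (fun t : ℝ => (t : OnePoint ℝ)) ''
        Ioo (S.ξ₀ (bar (l.dropLast.getLast hd))) (S.ξ₁ (bar (l.dropLast.getLast hd))) := by
      rintro ⟨z, hz, hzeq⟩
      have : z = x := OnePoint.coe_injective hzeq
      subst this
      have hdj := S.hdisj (l.getLast hl) (bar (l.dropLast.getLast hd)) hlast_ne
      exact (Set.disjoint_left.1 hdj) hx (mem_of_mem_of_subset hz Ioo_subset_Icc_self)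
    have hQ := S.Qmain hpref hd ((x : ℝ) : OnePoint ℝ) hxnot
    obtain ⟨y, hy, hyeq⟩ := hQ
    rw [mobiusOP_coe] at hyeq
    by_cases hz : (S.wordγ l.dropLast) 1 0 * x + (S.wordγ l.dropLast) 1 1 = 0
    · rw [if_pos hz] at hyeq
      exact absurd hyeq (OnePoint.coe_ne_infty y)
    · rw [if_neg hz] at hyeq
      have : mobius (S.wordγ l.dropLast) x = y := OnePoint.coe_injective hyeq.symm
      refine ⟨hz, ?_⟩
      rw [this, ← hhead]
      exact hy

lemma pole_mem {w : List (Fin (2 * r))} (hw : S.IsWord w) (hwne : w ≠ []) :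
    (S.wordγ w) 1 0 ≠ 0 ∧
    -(S.wordγ w) 1 1 / (S.wordγ w) 1 0 ∈
      Icc (S.ξ₀ (bar (w.getLast hwne))) (S.ξ₁ (bar (w.getLast hwne))) := by
  have hw' : S.IsWord ((w.map bar).reverse) := S.isWord_reverse_bar hw
  have hne' : (w.map bar).reverse ≠ [] := by
    simp [hwne]
  have hhead : (w.map bar).reverse.head hne' = bar (w.getLast hwne) := by
    rw [List.head_reverse, List.getLast_map]
  have hinfnot : (OnePoint.infty : OnePoint ℝ) ∉ (fun t : ℝ => (t : OnePoint ℝ)) ''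
      Ioo (S.ξ₀ (bar ((w.map bar).reverse.getLast hne'))) (S.ξ₁ (bar ((w.map bar).reverse.getLast hne'))) := by
    rintro ⟨z, _, hzeq⟩
    exact OnePoint.coe_ne_infty z hzeq
  have hQ := S.Qmain hw' hne' OnePoint.infty hinfnot
  rw [S.wordγ_reverse_bar, hhead] at hQ
  obtain ⟨y, hy, hyeq⟩ := hQ
  rw [mobiusOP_infty] at hyeq
  obtain ⟨e00, e01, e10, e11⟩ := inv_ent (S.wordγ w)
  by_cases hc : ((S.wordγ w)⁻¹) 1 0 = 0
  · rw [if_pos hc] at hyeq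
    exact absurd hyeq (OnePoint.coe_ne_infty y)
  · rw [if_neg hc] at hyeq
    have hc' : (S.wordγ w) 1 0 ≠ 0 := by
      intro h0
      rw [e10, h0] at hc
      exact hc (by ring)
    refine ⟨hc', ?_⟩
    have : ((S.wordγ w)⁻¹) 0 0 / ((S.wordγ w)⁻¹) 1 0 = y := OnePoint.coe_injective hyeq.symm
    rw [e00, e10] at this
    have heq : -(S.wordγ w) 1 1 / (S.wordγ w) 1 0 = y := by
      rw [← this]; ring
    rw [heq]
    exact hy

lemma keyB {l : List (Fin (2 * r))} (hw : S.IsWord l) (hl : l ≠ []) :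
    S.wordγ l.dropLast = 1 ∨
    ∃ f, f ≠ l.getLast hl ∧ (S.wordγ l.dropLast) 1 0 ≠ 0 ∧
      -(S.wordγ l.dropLast) 1 1 / (S.wordγ l.dropLast) 1 0 ∈ Icc (S.ξ₀ f) (S.ξ₁ f) := by
  by_cases hd : l.dropLast = []
  · left
    rw [hd]
    rfl
  · right
    have hpref : S.IsWord l.dropLast := hw.prefix (List.dropLast_prefix l)
    have happ : l.dropLast ++ [l.getLast hl] = l := List.dropLast_append_getLast hl
    have hlast_ne : l.getLast hl ≠ bar (l.dropLast.getLast hd) := by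
      have hw2 : List.Chain' (fun p q => q ≠ bar p) (l.dropLast ++ [l.getLast hl]) := by
        rw [happ]; exact hw
      unfold List.Chain' at hw2; rw [List.isChain_append] at hw2
      exact hw2.2.2 _ (by rw [List.getLast?_eq_getLast hd]; rfl) _ rfl
    obtain ⟨h1, h2⟩ := S.pole_mem hpref hd
    exact ⟨bar (l.dropLast.getLast hd), hlast_ne.symm, h1, h2⟩

end SchottkyData

set_option maxHeartbeats 2000000 in
theorem concatenation' (r : ℕ) (S : SchottkyData r) :
    ∃ C > (0 : ℝ), ∀ (l m : List (Fin (2 * r))) (h1 : l ≠ []) (h2 : m ≠ []),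
      S.IsWord l → S.IsWord m → l.getLast h1 = m.head h2 →
      C⁻¹ * ((volume (S.wordI l)).toReal * (volume (S.wordI m)).toReal)
        ≤ (volume (S.wordI (l.dropLast ++ m))).toReal ∧
      (volume (S.wordI (l.dropLast ++ m))).toReal
        ≤ C * ((volume (S.wordI l)).toReal * (volume (S.wordI m)).toReal) := by
  have h2r : 0 < 2 * r := by have := S.hr; omega
  haveI : Nonempty (Fin (2 * r)) := ⟨⟨0, h2r⟩⟩
  have HU : (Finset.univ : Finset (Fin (2 * r))).Nonempty := Finset.univ_nonempty
  set sup1 := Finset.univ.sup' HU S.ξ₁ with hsup1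
  set inf0 := Finset.univ.inf' HU S.ξ₀ with hinf0
  set span := sup1 - inf0 with hspandef
  have hhull : ∀ a : Fin (2 * r), ∀ x ∈ Icc (S.ξ₀ a) (S.ξ₁ a), inf0 ≤ x ∧ x ≤ sup1 := by
    intro a x hx
    constructor
    · exact le_trans (Finset.inf'_le _ (Finset.mem_univ a)) hx.1
    · exact le_trans hx.2 (Finset.le_sup' _ (Finset.mem_univ a))
  have hspan : ∀ a b : Fin (2 * r), ∀ x ∈ Icc (S.ξ₀ a) (S.ξ₁ a),
      ∀ p ∈ Icc (S.ξ₀ b) (S.ξ₁ b), |x - p| ≤ span := by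
    intro a b x hx p hp
    obtain ⟨hx1, hx2⟩ := hhull a x hx
    obtain ⟨hp1, hp2⟩ := hhull b p hp
    rw [abs_le]
    constructor <;> simp only [hspandef] <;> linarith
  set gap : Fin (2 * r) → Fin (2 * r) → ℝ := fun a b =>
    if S.ξ₁ a < S.ξ₀ b then S.ξ₀ b - S.ξ₁ a else S.ξ₀ a - S.ξ₁ b with hgapdef
  have hgap : ∀ a b : Fin (2 * r), a ≠ b → 0 < gap a b ∧
      ∀ x ∈ Icc (S.ξ₀ a) (S.ξ₁ a), ∀ p ∈ Icc (S.ξ₀ b) (S.ξ₁ b), gap a b ≤ |x - p| := by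
    intro a b hab
    have horder : S.ξ₁ a < S.ξ₀ b ∨ S.ξ₁ b < S.ξ₀ a := by
      by_contra hcon
      push_neg at hcon
      obtain ⟨hc1, hc2⟩ := hcon
      have hma : max (S.ξ₀ a) (S.ξ₀ b) ∈ Icc (S.ξ₀ a) (S.ξ₁ a) :=
        ⟨le_max_left _ _, max_le (S.hlt a).le hc1⟩
      have hmb : max (S.ξ₀ a) (S.ξ₀ b) ∈ Icc (S.ξ₀ b) (S.ξ₁ b) :=
        ⟨le_max_right _ _, max_le hc2 (S.hlt b).le⟩
      exact (Set.disjoint_left.1 (S.hdisj a b hab)) hma hmb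
    rcases horder with ho | ho
    · have hg : gap a b = S.ξ₀ b - S.ξ₁ a := by rw [hgapdef]; simp [ho]
      rw [hg]
      refine ⟨by linarith, ?_⟩
      intro x hx p hp
      have : x - p ≤ -(S.ξ₀ b - S.ξ₁ a) := by
        have := hx.2; have := hp.1; linarith
      rw [abs_sub_comm, le_abs]
      left
      have := hx.2; have := hp.1; linarith
    · have hno : ¬ S.ξ₁ a < S.ξ₀ b := by
        have := S.hlt a; have := S.hlt b; intro hcon; linarith
      have hg : gap a b = S.ξ₀ a - S.ξ₁ b := by rw [hgapdef]; simp [hno]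
      rw [hg]
      refine ⟨by linarith, ?_⟩
      intro x hx p hp
      rw [le_abs]
      left
      have := hx.1; have := hp.2; linarith
  set pairs := Finset.filter (fun p : Fin (2 * r) × Fin (2 * r) => p.1 ≠ p.2)
      (Finset.univ ×ˢ Finset.univ) with hpairsdef
  have hpairsne : pairs.Nonempty := by
    refine ⟨(⟨0, h2r⟩, ⟨1, by omega⟩), ?_⟩
    rw [hpairsdef, Finset.mem_filter]
    refine ⟨Finset.mem_product.2 ⟨Finset.mem_univ _, Finset.mem_univ _⟩, ?_⟩
    intro hcon
    have := congrArg Fin.val hcon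
    simp at this
  set ε := pairs.inf' hpairsne (fun p => gap p.1 p.2) with hεdef
  have hε : 0 < ε := by
    rw [hεdef, Finset.lt_inf'_iff]
    intro p hp
    rw [hpairsdef, Finset.mem_filter] at hp
    exact (hgap p.1 p.2 hp.2).1
  have hεle : ∀ a b : Fin (2 * r), a ≠ b → ε ≤ gap a b := by
    intro a b hab
    have hmem : (a, b) ∈ pairs := by
      rw [hpairsdef, Finset.mem_filter]
      exact ⟨Finset.mem_product.2 ⟨Finset.mem_univ _, Finset.mem_univ _⟩, hab⟩
    exact Finset.inf'_le (fun p => gap p.1 p.2) hmem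
  set K := max (span / ε) 1 with hKdef
  have hK1 : (1 : ℝ) ≤ K := le_max_right _ _
  have hK0 : (0 : ℝ) < K := lt_of_lt_of_le one_pos hK1
  have hspanK : span ≤ K * ε := by
    have h1 : span / ε ≤ K := le_max_left _ _
    rw [div_le_iff₀ hε] at h1
    linarith
  -- the distortion estimate
  have hdist : ∀ (l : List (Fin (2 * r))) (hl : l ≠ []), S.IsWord l →
      ∀ x y : ℝ, x ∈ Icc (S.ξ₀ (l.getLast hl)) (S.ξ₁ (l.getLast hl)) →
        y ∈ Icc (S.ξ₀ (l.getLast hl)) (S.ξ₁ (l.getLast hl)) →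
      |qd (S.wordγ l.dropLast) x| ≤ K * |qd (S.wordγ l.dropLast) y| := by
    intro l hl hwl x y hx hy
    rcases S.keyB hwl hl with hone | ⟨f, hfe, hc, hpole⟩
    · rw [hone]
      have hq1 : ∀ z : ℝ, qd (1 : SL2) z = 1 := by
        intro z; unfold qd; simp
      rw [hq1, hq1, abs_one]
      linarith
    · set g := S.wordγ l.dropLast
      set c := g 1 0
      set p := -g 1 1 / c
      have hqc : ∀ z : ℝ, qd g z = c * (z - p) := by
        intro z
        show g 1 0 * z + g 1 1 = g 1 0 * (z - -g 1 1 / g 1 0)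
        field_simp
        have hc' : g 1 0 ≠ 0 := hc; field_simp; ring
      have hxp : |x - p| ≤ span := hspan _ f x hx p hpole
      have hyp : ε ≤ |y - p| :=
        le_trans (hεle (l.getLast hl) f (fun h => hfe h.symm))
          ((hgap (l.getLast hl) f (fun h => hfe h.symm)).2 y hy p hpole)
      rw [hqc, hqc, abs_mul, abs_mul]
      have hcnn : 0 ≤ |c| := abs_nonneg c
      have hKε : K * ε ≤ K * |y - p| := mul_le_mul_of_nonneg_left hyp hK0.le
      calc |c| * |x - p| ≤ |c| * (K * |y - p|) := by
            apply mul_le_mul_of_nonneg_left _ hcnn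
            linarith
        _ = K * (|c| * |y - p|) := by ring
  -- minimum interval length
  set Lmin := Finset.univ.inf' HU (fun a => S.ξ₁ a - S.ξ₀ a) with hLmindef
  have hLmin : 0 < Lmin := by
    rw [hLmindef, Finset.lt_inf'_iff]
    intro a _
    have := S.hlt a
    linarith
  have hLminle : ∀ a : Fin (2 * r), Lmin ≤ S.ξ₁ a - S.ξ₀ a := by
    intro a
    exact Finset.inf'_le (fun a => S.ξ₁ a - S.ξ₀ a) (Finset.mem_univ a)
  have hLspan : ∀ a : Fin (2 * r), S.ξ₁ a - S.ξ₀ a ≤ span := by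
    intro a
    have h0 := (hhull a (S.ξ₀ a) ⟨le_refl _, (S.hlt a).le⟩).1
    have h1 := (hhull a (S.ξ₁ a) ⟨(S.hlt a).le, le_refl _⟩).2
    rw [hspandef]; linarith
  have hspan0 : 0 < span := by
    have ha := S.hlt (⟨0, h2r⟩ : Fin (2 * r))
    have hb := hLspan (⟨0, h2r⟩ : Fin (2 * r))
    linarith
  have hK2 : (0:ℝ) < K ^ 2 := by positivity
  set C := K ^ 2 * span + K ^ 2 / Lmin with hCdef
  have hC : 0 < C := by
    rw [hCdef]
    have t1 : 0 < K ^ 2 * span := mul_pos hK2 hspan0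
    have t2 : 0 < K ^ 2 / Lmin := div_pos hK2 hLmin
    linarith
  refine ⟨C, hC, ?_⟩
  intro l m h1 h2 hwl hwm hconn
  set e := l.getLast h1 with hedef
  set f := m.getLast h2 with hfdef
  set g := S.wordγ l.dropLast with hgdef
  set h := S.wordγ m.dropLast with hhdef
  have hee : 0 < S.ξ₁ e - S.ξ₀ e := by linarith [S.hlt e]
  have hff : 0 < S.ξ₁ f - S.ξ₀ f := by linarith [S.hlt f]
  have hqg : ∀ x ∈ Icc (S.ξ₀ e) (S.ξ₁ e), qd g x ≠ 0 := by
    intro x hx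
    exact (S.keyA hwl h1 hx).1
  have hmh : ∀ x ∈ Icc (S.ξ₀ f) (S.ξ₁ f), qd h x ≠ 0 ∧ mobius h x ∈ Icc (S.ξ₀ e) (S.ξ₁ e) := by
    intro x hx
    have := S.keyA hwm h2 hx
    rwa [← hconn] at this
  -- the three lengths
  have hwordIl : S.wordI l = mobius g '' Icc (S.ξ₀ e) (S.ξ₁ e) := by
    rw [SchottkyData.wordI, dif_neg h1]
  have hwordIm : S.wordI m = mobius h '' Icc (S.ξ₀ f) (S.ξ₁ f) := by
    rw [SchottkyData.wordI, dif_neg h2]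
  have hlmne : l.dropLast ++ m ≠ [] := by
    intro hcon
    rw [List.append_eq_nil_iff] at hcon
    exact h2 hcon.2
  have hlmlast : (l.dropLast ++ m).getLast hlmne = f := by
    rw [List.getLast_append, dif_neg (by simp [h2])]
  have hlmdrop : (l.dropLast ++ m).dropLast = l.dropLast ++ m.dropLast := by
    rw [List.dropLast_append, if_neg (by simp [h2])]
  have hwordIlm : S.wordI (l.dropLast ++ m)
      = mobius (g * h) '' Icc (S.ξ₀ f) (S.ξ₁ f) := by
    rw [SchottkyData.wordI, dif_neg hlmne]
    rw [hlmdrop, S.wordγ_append]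
    congr 1 <;> rw [hlmlast]
  have hqgh : ∀ x ∈ Icc (S.ξ₀ f) (S.ξ₁ f), qd (g * h) x ≠ 0 := by
    intro x hx
    obtain ⟨hqh, hmem⟩ := hmh x hx
    rw [qd_mul g h x hqh]
    exact mul_ne_zero (hqg _ hmem) hqh
  have lenl : (volume (S.wordI l)).toReal
      = (S.ξ₁ e - S.ξ₀ e) / (qd g (S.ξ₀ e) * qd g (S.ξ₁ e)) := by
    rw [hwordIl, mobius_len g (S.hlt e).le hqg]
  have lenm : (volume (S.wordI m)).toReal
      = (S.ξ₁ f - S.ξ₀ f) / (qd h (S.ξ₀ f) * qd h (S.ξ₁ f)) := by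
    rw [hwordIm, mobius_len h (S.hlt f).le (fun x hx => (hmh x hx).1)]
  set u := mobius h (S.ξ₀ f) with hudef
  set v := mobius h (S.ξ₁ f) with hvdef
  have hu : u ∈ Icc (S.ξ₀ e) (S.ξ₁ e) := (hmh _ ⟨le_refl _, (S.hlt f).le⟩).2
  have hv : v ∈ Icc (S.ξ₀ e) (S.ξ₁ e) := (hmh _ ⟨(S.hlt f).le, le_refl _⟩).2
  have lenlm : (volume (S.wordI (l.dropLast ++ m))).toReal
      = (S.ξ₁ f - S.ξ₀ f) / ((qd g u * qd g v) * (qd h (S.ξ₀ f) * qd h (S.ξ₁ f))) := by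
    rw [hwordIlm, mobius_len (g * h) (S.hlt f).le hqgh]
    rw [qd_mul g h _ (hmh _ ⟨le_refl _, (S.hlt f).le⟩).1,
        qd_mul g h _ (hmh _ ⟨(S.hlt f).le, le_refl _⟩).1]
    congr 1
    ring
  -- positivity of the denominators
  have hPg : 0 < qd g (S.ξ₀ e) * qd g (S.ξ₁ e) :=
    qd_sign g hqg ⟨le_refl _, (S.hlt e).le⟩ ⟨(S.hlt e).le, le_refl _⟩
  have hPh : 0 < qd h (S.ξ₀ f) * qd h (S.ξ₁ f) :=
    qd_sign h (fun x hx => (hmh x hx).1) ⟨le_refl _, (S.hlt f).le⟩ ⟨(S.hlt f).le, le_refl _⟩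
  have hQ : 0 < qd g u * qd g v := qd_sign g hqg hu hv
  -- distortion bounds
  have hd1 : |qd g (S.ξ₀ e)| ≤ K * |qd g u| :=
    hdist l h1 hwl _ u ⟨le_refl _, (S.hlt e).le⟩ hu
  have hd2 : |qd g (S.ξ₁ e)| ≤ K * |qd g v| :=
    hdist l h1 hwl _ v ⟨(S.hlt e).le, le_refl _⟩ hv
  have hd3 : |qd g u| ≤ K * |qd g (S.ξ₀ e)| :=
    hdist l h1 hwl u _ hu ⟨le_refl _, (S.hlt e).le⟩
  have hd4 : |qd g v| ≤ K * |qd g (S.ξ₁ e)| :=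
    hdist l h1 hwl v _ hv ⟨(S.hlt e).le, le_refl _⟩
  have habsPg : qd g (S.ξ₀ e) * qd g (S.ξ₁ e) = |qd g (S.ξ₀ e)| * |qd g (S.ξ₁ e)| := by
    rw [← abs_mul, abs_of_pos hPg]
  have habsQ : qd g u * qd g v = |qd g u| * |qd g v| := by
    rw [← abs_mul, abs_of_pos hQ]
  have hPgK : qd g (S.ξ₀ e) * qd g (S.ξ₁ e) ≤ K ^ 2 * (qd g u * qd g v) := by
    rw [habsPg, habsQ]
    calc |qd g (S.ξ₀ e)| * |qd g (S.ξ₁ e)|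
        ≤ (K * |qd g u|) * (K * |qd g v|) :=
          mul_le_mul hd1 hd2 (abs_nonneg _) (by positivity)
      _ = K ^ 2 * (|qd g u| * |qd g v|) := by ring
  have hQK : qd g u * qd g v ≤ K ^ 2 * (qd g (S.ξ₀ e) * qd g (S.ξ₁ e)) := by
    rw [habsPg, habsQ]
    calc |qd g u| * |qd g v|
        ≤ (K * |qd g (S.ξ₀ e)|) * (K * |qd g (S.ξ₁ e)|) :=
          mul_le_mul hd3 hd4 (abs_nonneg _) (by positivity)
      _ = K ^ 2 * (|qd g (S.ξ₀ e)| * |qd g (S.ξ₁ e)|) := by ring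
  -- comparison of C with the local constants
  have hCup : K ^ 2 ≤ C * (S.ξ₁ e - S.ξ₀ e) := by
    have h2' : K ^ 2 / Lmin ≤ C := by
      rw [hCdef]
      have : 0 < K ^ 2 * span := mul_pos hK2 hspan0
      linarith
    calc K ^ 2 = K ^ 2 / Lmin * Lmin := (div_mul_cancel₀ _ (ne_of_gt hLmin)).symm
      _ ≤ C * Lmin := mul_le_mul_of_nonneg_right h2' hLmin.le
      _ ≤ C * (S.ξ₁ e - S.ξ₀ e) := mul_le_mul_of_nonneg_left (hLminle e) hC.le
  have hClo : (S.ξ₁ e - S.ξ₀ e) * K ^ 2 ≤ C := by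
    calc (S.ξ₁ e - S.ξ₀ e) * K ^ 2 ≤ span * K ^ 2 :=
          mul_le_mul_of_nonneg_right (hLspan e) hK2.le
      _ ≤ C := by
          rw [hCdef]
          have : 0 < K ^ 2 / Lmin := div_pos hK2 hLmin
          nlinarith []
  rw [lenl, lenm, lenlm]
  have key1 : (S.ξ₁ e - S.ξ₀ e) * (qd g u * qd g v)
      ≤ C * (qd g (S.ξ₀ e) * qd g (S.ξ₁ e)) := by
    calc (S.ξ₁ e - S.ξ₀ e) * (qd g u * qd g v)
        ≤ (S.ξ₁ e - S.ξ₀ e) * (K ^ 2 * (qd g (S.ξ₀ e) * qd g (S.ξ₁ e))) :=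
          mul_le_mul_of_nonneg_left hQK hee.le
      _ = ((S.ξ₁ e - S.ξ₀ e) * K ^ 2) * (qd g (S.ξ₀ e) * qd g (S.ξ₁ e)) := by ring
      _ ≤ C * (qd g (S.ξ₀ e) * qd g (S.ξ₁ e)) := mul_le_mul_of_nonneg_right hClo hPg.le
  have key2 : qd g (S.ξ₀ e) * qd g (S.ξ₁ e)
      ≤ C * (S.ξ₁ e - S.ξ₀ e) * (qd g u * qd g v) := by
    calc qd g (S.ξ₀ e) * qd g (S.ξ₁ e) ≤ K ^ 2 * (qd g u * qd g v) := hPgK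
      _ ≤ C * (S.ξ₁ e - S.ξ₀ e) * (qd g u * qd g v) :=
          mul_le_mul_of_nonneg_right hCup hQ.le
  have hPgPh : 0 < qd g (S.ξ₀ e) * qd g (S.ξ₁ e) * (qd h (S.ξ₀ f) * qd h (S.ξ₁ f)) :=
    mul_pos hPg hPh
  have hQPh : 0 < qd g u * qd g v * (qd h (S.ξ₀ f) * qd h (S.ξ₁ f)) := mul_pos hQ hPh
  constructor
  · -- lower bound
    rw [inv_mul_le_iff₀ hC, div_mul_div_comm, mul_div_assoc',
      div_le_div_iff₀ hPgPh hQPh]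
    calc (S.ξ₁ e - S.ξ₀ e) * (S.ξ₁ f - S.ξ₀ f)
          * (qd g u * qd g v * (qd h (S.ξ₀ f) * qd h (S.ξ₁ f)))
        = ((S.ξ₁ e - S.ξ₀ e) * (qd g u * qd g v))
            * ((S.ξ₁ f - S.ξ₀ f) * (qd h (S.ξ₀ f) * qd h (S.ξ₁ f))) := by ring
      _ ≤ (C * (qd g (S.ξ₀ e) * qd g (S.ξ₁ e)))
            * ((S.ξ₁ f - S.ξ₀ f) * (qd h (S.ξ₀ f) * qd h (S.ξ₁ f))) :=
          mul_le_mul_of_nonneg_right key1 (le_of_lt (mul_pos hff hPh))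
      _ = C * (S.ξ₁ f - S.ξ₀ f)
            * (qd g (S.ξ₀ e) * qd g (S.ξ₁ e) * (qd h (S.ξ₀ f) * qd h (S.ξ₁ f))) := by ring
  · -- upper bound
    rw [div_mul_div_comm, mul_div_assoc', div_le_div_iff₀ hQPh hPgPh]
    calc (S.ξ₁ f - S.ξ₀ f)
          * (qd g (S.ξ₀ e) * qd g (S.ξ₁ e) * (qd h (S.ξ₀ f) * qd h (S.ξ₁ f)))
        = (qd g (S.ξ₀ e) * qd g (S.ξ₁ e))
            * ((S.ξ₁ f - S.ξ₀ f) * (qd h (S.ξ₀ f) * qd h (S.ξ₁ f))) := by ring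
      _ ≤ (C * (S.ξ₁ e - S.ξ₀ e) * (qd g u * qd g v))
            * ((S.ξ₁ f - S.ξ₀ f) * (qd h (S.ξ₀ f) * qd h (S.ξ₁ f))) :=
          mul_le_mul_of_nonneg_right key2 (le_of_lt (mul_pos hff hPh))
      _ = C * ((S.ξ₁ e - S.ξ₀ e) * (S.ξ₁ f - S.ξ₀ f))
            * (qd g u * qd g v * (qd h (S.ξ₀ f) * qd h (S.ξ₁ f))) := by ring

/-- **Concatenation:** there is `C_Γ > 0` depending only on the Schottky data such that
`C_Γ⁻¹|I_𝐚||I_𝐛| ≤ |I_{𝐚'𝐛}| ≤ C_Γ|I_𝐚||I_𝐛|` whenever `𝐚 ⇝ 𝐛` (the last letter of `𝐚`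
equals the first letter of `𝐛`). -/
theorem concatenation (r : ℕ) (S : SchottkyData r) :
    ∃ C > (0 : ℝ), ∀ (l m : List (Fin (2 * r))) (h1 : l ≠ []) (h2 : m ≠ []),
      S.IsWord l → S.IsWord m → l.getLast h1 = m.head h2 →
      C⁻¹ * (ivlen (S.wordI l) * ivlen (S.wordI m)) ≤ ivlen (S.wordI (l.dropLast ++ m)) ∧
      ivlen (S.wordI (l.dropLast ++ m)) ≤ C * (ivlen (S.wordI l) * ivlen (S.wordI m)) := by
  obtain ⟨C, hC, hmain⟩ := concatenation' r S
  refine ⟨C, hC, ?_⟩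
  intro l m h1 h2 hwl hwm hc
  simpa only [ivlen] using hmain l m h1 h2 hwl hwm hc


end
end

section
/- There exists a constant C_Γ > 0, depending only on the Schottky data, such that for every nonempty word 𝐚 ∈ W°: C_Γ^{-1} |I_𝐚| ≤ |I_{𝐚̄}| ≤ C_Γ |I_𝐚|, where 𝐚̄ denotes the reversed-and-barred word. -/
open MeasureTheory Set Real Pointwise

noncomputable section
open MeasureTheory Set Real

namespace RevAux

/-- Sum of squares of entries ("Frobenius norm squared"). -/
def nrm (g : SL2) : ℝ := g 0 0 ^ 2 + g 0 1 ^ 2 + g 1 0 ^ 2 + g 1 1 ^ 2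

lemma SL2_det (g : SL2) : g 0 0 * g 1 1 - g 0 1 * g 1 0 = 1 := by
  have h := g.2
  rwa [Matrix.det_fin_two] at h

lemma nrm_inv (g : SL2) : nrm g⁻¹ = nrm g := by
  rw [Matrix.SpecialLinearGroup.SL2_inv_expl g]
  simp [nrm]
  try ring

lemma mul_entry (g h : SL2) (i j : Fin 2) :
    (g * h) i j = g i 0 * h 0 j + g i 1 * h 1 j := by
  show (↑(g * h) : Matrix (Fin 2) (Fin 2) ℝ) i j = _
  rw [Matrix.SpecialLinearGroup.coe_mul, Matrix.mul_apply, Fin.sum_univ_two]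
  try rfl

lemma nrm_mul_le (g h : SL2) : nrm (g * h) ≤ nrm g * nrm h := by
  simp only [nrm, mul_entry]
  nlinarith [sq_nonneg (g 0 0 * h 1 0 - g 0 1 * h 0 0), sq_nonneg (g 0 0 * h 1 1 - g 0 1 * h 0 1),
    sq_nonneg (g 1 0 * h 1 0 - g 1 1 * h 0 0), sq_nonneg (g 1 0 * h 1 1 - g 1 1 * h 0 1)]

lemma two_le_nrm (g : SL2) : 2 ≤ nrm g := by
  have h := SL2_det g
  simp only [nrm]
  nlinarith [sq_nonneg (g 0 0 - g 1 1), sq_nonneg (g 0 1 + g 1 0)]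

lemma nrm_pos (g : SL2) : 0 < nrm g := lt_of_lt_of_le two_pos (two_le_nrm g)

lemma one_entry (i j : Fin 2) : (1 : SL2) i j = if i = j then (1:ℝ) else 0 := by
  show (↑(1 : SL2) : Matrix (Fin 2) (Fin 2) ℝ) i j = _
  rw [Matrix.SpecialLinearGroup.coe_one, Matrix.one_apply]

lemma mobius_one (x : ℝ) : mobius 1 x = x := by
  simp [mobius, one_entry]

lemma denom_mul (g h : SL2) (x : ℝ) (hh : h 1 0 * x + h 1 1 ≠ 0) :
    (g * h) 1 0 * x + (g * h) 1 1
      = (h 1 0 * x + h 1 1) * (g 1 0 * mobius h x + g 1 1) := by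
  rw [mobius]
  rw [mul_entry, mul_entry]
  field_simp
  ring

lemma numer_mul (g h : SL2) (x : ℝ) (hh : h 1 0 * x + h 1 1 ≠ 0) :
    (g * h) 0 0 * x + (g * h) 0 1
      = (h 1 0 * x + h 1 1) * (g 0 0 * mobius h x + g 0 1) := by
  rw [mobius]
  rw [mul_entry, mul_entry]
  field_simp
  ring

lemma mobius_mul (g h : SL2) (x : ℝ) (hh : h 1 0 * x + h 1 1 ≠ 0) :
    mobius (g * h) x = mobius g (mobius h x) := by
  conv_lhs => rw [mobius, numer_mul g h x hh, denom_mul g h x hh]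
  rw [mul_div_mul_left _ _ hh]
  rfl

lemma mobius_sub (g : SL2) (s t : ℝ) (hs : g 1 0 * s + g 1 1 ≠ 0)
    (ht : g 1 0 * t + g 1 1 ≠ 0) :
    mobius g t - mobius g s = (t - s) / ((g 1 0 * s + g 1 1) * (g 1 0 * t + g 1 1)) := by
  have hdet := SL2_det g
  have h1 : (g 0 0 * t + g 0 1) * (g 1 0 * s + g 1 1)
      - (g 1 0 * t + g 1 1) * (g 0 0 * s + g 0 1) = t - s := by
    linear_combination (t - s) * hdet
  rw [mobius, mobius, div_sub_div _ _ ht hs, h1, mul_comm]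

end RevAux
end
section Part2
namespace RevAux
open SchottkyData List

variable {r : ℕ}

lemma bar_val (a : Fin (2 * r)) :
    (bar a : ℕ) = if (a : ℕ) < r then (a : ℕ) + r else (a : ℕ) - r := by
  unfold bar
  split_ifs with h <;> rfl

lemma bar_bar (a : Fin (2 * r)) : bar (bar a) = a := by
  have ha := a.isLt
  apply Fin.ext
  rw [bar_val, bar_val]
  split_ifs <;> omega

lemma wordγ_nil (S : SchottkyData r) : S.wordγ [] = 1 := rfl

lemma wordγ_cons (S : SchottkyData r) (a : Fin (2 * r)) (l : List (Fin (2 * r))) :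
    S.wordγ (a :: l) = S.γ a * S.wordγ l := by
  simp [SchottkyData.wordγ]

lemma wordγ_append (S : SchottkyData r) (l₁ l₂ : List (Fin (2 * r))) :
    S.wordγ (l₁ ++ l₂) = S.wordγ l₁ * S.wordγ l₂ := by
  simp [SchottkyData.wordγ]

lemma wordγ_singleton (S : SchottkyData r) (a : Fin (2 * r)) :
    S.wordγ [a] = S.γ a := by
  simp [SchottkyData.wordγ]

lemma wordγ_revbar (S : SchottkyData r) (l : List (Fin (2 * r))) :
    S.wordγ ((l.map bar).reverse) = (S.wordγ l)⁻¹ := by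
  have h1 : ((l.map bar).reverse).map S.γ = ((l.map S.γ).map (fun x => x⁻¹)).reverse := by
    rw [List.map_reverse, List.map_map, List.map_map]
    congr 1
    apply List.map_congr_left
    intro a _
    exact S.hinv a
  show (((l.map bar).reverse).map S.γ).prod = _
  rw [h1, ← List.prod_inv_reverse]
  rfl

/-- Single-letter ping-pong step, extracted from `hmap`. -/
lemma step (S : SchottkyData r) (a : Fin (2 * r)) (x : ℝ)
    (hx : x ∉ Ioo (S.ξ₀ (bar a)) (S.ξ₁ (bar a))) :
    (S.γ a) 1 0 * x + (S.γ a) 1 1 ≠ 0 ∧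
      mobius (S.γ a) x ∈ Icc (S.ξ₀ a) (S.ξ₁ a) := by
  have hmem : mobiusOP (S.γ a) (x : OnePoint ℝ) ∈
      (fun t : ℝ => (t : OnePoint ℝ)) '' Icc (S.ξ₀ a) (S.ξ₁ a) := by
    rw [← S.hmap a]
    refine ⟨(x : OnePoint ℝ), ⟨mem_univ _, ?_⟩, rfl⟩
    rintro ⟨t, ht, hte⟩
    exact hx (OnePoint.coe_injective hte ▸ ht)
  rcases hmem with ⟨t, ht, hte⟩
  have hred : mobiusOP (S.γ a) (x : OnePoint ℝ)
      = (if (S.γ a) 1 0 * x + (S.γ a) 1 1 = 0 then OnePoint.infty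
          else ((mobius (S.γ a) x : ℝ) : OnePoint ℝ)) := rfl
  by_cases hD : (S.γ a) 1 0 * x + (S.γ a) 1 1 = 0
  · exfalso
    rw [hred, if_pos hD] at hte
    exact OnePoint.infty_ne_coe t hte.symm
  · rw [hred, if_neg hD] at hte
    refine ⟨hD, ?_⟩
    rwa [← OnePoint.coe_injective hte]

lemma pingpong (S : SchottkyData r) (l : List (Fin (2 * r))) (hl : l ≠ [])
    (hw : S.IsWord l) (x : ℝ)
    (hx : x ∉ Ioo (S.ξ₀ (bar (l.getLast hl))) (S.ξ₁ (bar (l.getLast hl)))) :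
    (S.wordγ l) 1 0 * x + (S.wordγ l) 1 1 ≠ 0 ∧
      mobius (S.wordγ l) x ∈ Icc (S.ξ₀ (l.head hl)) (S.ξ₁ (l.head hl)) := by
  induction l with
  | nil => exact absurd rfl hl
  | cons a rest ih =>
    rcases eq_or_ne rest [] with h | h
    · subst h
      have hx' : x ∉ Ioo (S.ξ₀ (bar a)) (S.ξ₁ (bar a)) := by
        simpa using hx
      have hst := step S a x hx'
      constructor
      · simpa [wordγ_singleton] using hst.1
      · simpa [wordγ_singleton] using hst.2
    · have hgl : (a :: rest).getLast hl = rest.getLast h := List.getLast_cons h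
      rw [hgl] at hx
      have hw' : S.IsWord rest := hw.tail
      have hrel : rest.head h ≠ bar a := by
        have := (List.isChain_cons.mp hw).1
        exact this _ (List.head?_eq_head h)
      obtain ⟨hD, hmem⟩ := ih h hw' hx
      set y := mobius (S.wordγ rest) x with hy
      have hynot : y ∉ Ioo (S.ξ₀ (bar a)) (S.ξ₁ (bar a)) := by
        intro hyin
        have h2 : y ∈ Icc (S.ξ₀ (bar a)) (S.ξ₁ (bar a)) := Ioo_subset_Icc_self hyin
        exact Set.disjoint_left.mp (S.hdisj _ _ hrel) hmem h2
      obtain ⟨hD2, hmem2⟩ := step S a y hynot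
      rw [wordγ_cons]
      constructor
      · rw [denom_mul _ _ _ hD]
        exact mul_ne_zero hD hD2
      · rw [mobius_mul _ _ _ hD]
        simpa using hmem2

lemma pole_mem (S : SchottkyData r) (l : List (Fin (2 * r))) (hl : l ≠ [])
    (hw : S.IsWord l) (hc : (S.wordγ l) 1 0 ≠ 0) :
    mobiusPole (S.wordγ l) ∈ Ioo (S.ξ₀ (bar (l.getLast hl))) (S.ξ₁ (bar (l.getLast hl))) := by
  by_contra h
  apply (pingpong S l hl hw _ h).1
  rw [mobiusPole]
  field_simp
  ring

end RevAux
end Part2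
section Part3
namespace RevAux
open SchottkyData List

variable {r : ℕ}

lemma alphabet_nonempty (S : SchottkyData r) : Nonempty (Fin (2 * r)) :=
  ⟨⟨0, by have := S.hr; omega⟩⟩

lemma consts (S : SchottkyData r) : ∃ M Δ L : ℝ, 0 < M ∧ 0 < Δ ∧ 0 < L ∧
    (∀ a, Icc (S.ξ₀ a) (S.ξ₁ a) ⊆ Icc (-M) M) ∧
    (∀ a b, a ≠ b → ∀ x ∈ Icc (S.ξ₀ a) (S.ξ₁ a), ∀ y ∈ Icc (S.ξ₀ b) (S.ξ₁ b),
      Δ ≤ |x - y|) ∧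
    (∀ a, L ≤ S.ξ₁ a - S.ξ₀ a) := by
  have hne := alphabet_nonempty S
  -- the bound M
  obtain ⟨a₀, ha₀⟩ := Finite.exists_max (fun a => max |S.ξ₀ a| |S.ξ₁ a|)
  set M := max (max |S.ξ₀ a₀| |S.ξ₁ a₀|) 1 with hM
  have hMpos : 0 < M := lt_of_lt_of_le one_pos (le_max_right _ _)
  have hMsub : ∀ a, Icc (S.ξ₀ a) (S.ξ₁ a) ⊆ Icc (-M) M := by
    intro a x hx
    have h1 : |S.ξ₀ a| ≤ M := le_trans (le_trans (le_max_left _ _) (ha₀ a)) (le_max_left _ _)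
    have h2 : |S.ξ₁ a| ≤ M := le_trans (le_trans (le_max_right _ _) (ha₀ a)) (le_max_left _ _)
    rw [abs_le] at h1 h2
    exact ⟨le_trans h1.1 hx.1, le_trans hx.2 h2.2⟩
  -- separation of the intervals
  have hsep : ∀ a b, a ≠ b → S.ξ₁ a < S.ξ₀ b ∨ S.ξ₁ b < S.ξ₀ a := by
    intro a b hab
    by_contra hcon
    push_neg at hcon
    obtain ⟨h1, h2⟩ := hcon
    have hx : max (S.ξ₀ a) (S.ξ₀ b) ∈ Icc (S.ξ₀ a) (S.ξ₁ a) :=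
      ⟨le_max_left _ _, max_le (S.hlt a).le h1⟩
    have hy : max (S.ξ₀ a) (S.ξ₀ b) ∈ Icc (S.ξ₀ b) (S.ξ₁ b) :=
      ⟨le_max_right _ _, max_le h2 (S.hlt b).le⟩
    exact Set.disjoint_left.mp (S.hdisj a b hab) hx hy
  -- the gap Δ
  set f : Fin (2 * r) × Fin (2 * r) → ℝ := fun p =>
    if p.1 = p.2 then 1 else max (S.ξ₀ p.2 - S.ξ₁ p.1) (S.ξ₀ p.1 - S.ξ₁ p.2) with hf
  have hfpos : ∀ p, 0 < f p := by
    rintro ⟨a, b⟩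
    rcases eq_or_ne a b with h | h
    · simp [hf, h]
    · rw [hf]
      simp only [if_neg h]
      rcases hsep a b h with h1 | h1
      · exact lt_max_of_lt_left (by linarith)
      · exact lt_max_of_lt_right (by linarith)
  obtain ⟨p₀, hp₀⟩ := Finite.exists_min f
  set Δ := f p₀ with hΔ
  have hgap : ∀ a b, a ≠ b → ∀ x ∈ Icc (S.ξ₀ a) (S.ξ₁ a), ∀ y ∈ Icc (S.ξ₀ b) (S.ξ₁ b),
      Δ ≤ |x - y| := by
    intro a b hab x hx y hy
    refine le_trans (hp₀ (a, b)) ?_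
    have hfab : f (a, b) = max (S.ξ₀ b - S.ξ₁ a) (S.ξ₀ a - S.ξ₁ b) := by
      rw [hf]; simp [hab]
    rw [hfab]
    rcases hsep a b hab with h1 | h1
    · refine max_le ?_ ?_
      · calc S.ξ₀ b - S.ξ₁ a ≤ y - x := by
              have := hx.2; have := hy.1; linarith
          _ ≤ |x - y| := by rw [abs_sub_comm]; exact le_abs_self _
      · have : S.ξ₀ a - S.ξ₁ b ≤ 0 := by
          have := S.hlt a; have := S.hlt b; linarith
        exact le_trans this (abs_nonneg _)
    · refine max_le ?_ ?_
      · have : S.ξ₀ b - S.ξ₁ a ≤ 0 := by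
          have := S.hlt a; have := S.hlt b; linarith
        exact le_trans this (abs_nonneg _)
      · calc S.ξ₀ a - S.ξ₁ b ≤ x - y := by
              have := hx.1; have := hy.2; linarith
          _ ≤ |x - y| := le_abs_self _
  -- the minimal length L
  obtain ⟨b₀, hb₀⟩ := Finite.exists_min (fun a => S.ξ₁ a - S.ξ₀ a)
  refine ⟨M, Δ, S.ξ₁ b₀ - S.ξ₀ b₀, hMpos, hfpos p₀, by linarith [S.hlt b₀], hMsub, hgap, hb₀⟩

/-- Key preparation: for a nonempty word `l` with `g = γ_{l'}`,
the denominator does not vanish on `I_{last}`, the image is `M`-bounded, and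
the pole (if any) is `Δ`-far from `I_{last}`. -/
lemma prep (S : SchottkyData r) (M Δ : ℝ)
    (hM : ∀ a, Icc (S.ξ₀ a) (S.ξ₁ a) ⊆ Icc (-M) M)
    (hΔ : ∀ a b, a ≠ b → ∀ x ∈ Icc (S.ξ₀ a) (S.ξ₁ a), ∀ y ∈ Icc (S.ξ₀ b) (S.ξ₁ b),
      Δ ≤ |x - y|)
    (l : List (Fin (2 * r))) (hl : l ≠ []) (hw : S.IsWord l) (x : ℝ)
    (hx : x ∈ Icc (S.ξ₀ (l.getLast hl)) (S.ξ₁ (l.getLast hl))) :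
    (S.wordγ l.dropLast) 1 0 * x + (S.wordγ l.dropLast) 1 1 ≠ 0 ∧
      |mobius (S.wordγ l.dropLast) x| ≤ M ∧
      ((S.wordγ l.dropLast) 1 0 ≠ 0 → Δ ≤ |x - mobiusPole (S.wordγ l.dropLast)|) := by
  rcases eq_or_ne l.dropLast [] with h | h
  · rw [h, wordγ_nil]
    have h10 : (1 : SL2) 1 0 = 0 := by rw [one_entry]; simp
    have h11 : (1 : SL2) 1 1 = 1 := by rw [one_entry]; simp
    refine ⟨by rw [h10, h11]; simp, ?_, by intro hc; exact absurd h10 hc⟩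
    rw [mobius_one]
    have := hM (l.getLast hl) hx
    rw [abs_le]
    exact ⟨this.1, this.2⟩
  · have hsplit := List.dropLast_append_getLast hl
    have hchain : S.IsWord (l.dropLast ++ [l.getLast hl]) := by rw [hsplit]; exact hw
    rw [SchottkyData.IsWord] at hchain
    unfold List.Chain' at hchain
    rw [List.isChain_append] at hchain
    obtain ⟨hw', -, hrel'⟩ := hchain
    have hrel : l.getLast hl ≠ bar (l.dropLast.getLast h) := by
      refine hrel' _ (List.getLast?_eq_getLast h) _ rfl
    obtain the_rest : True := trivial
    have hxnot : x ∉ Ioo (S.ξ₀ (bar (l.dropLast.getLast h))) (S.ξ₁ (bar (l.dropLast.getLast h))) := by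
      intro hxin
      exact Set.disjoint_left.mp (S.hdisj _ _ hrel) hx (Ioo_subset_Icc_self hxin)
    obtain ⟨hD, hmem⟩ := pingpong S l.dropLast h hw' x hxnot
    refine ⟨hD, ?_, ?_⟩
    · have := hM _ hmem
      rw [abs_le]
      exact ⟨this.1, this.2⟩
    · intro hc
      have hp := pole_mem S l.dropLast h hw' hc
      exact hΔ _ _ hrel x hx _ (Ioo_subset_Icc_self hp)

end RevAux
end Part3
section Part4
namespace RevAux
open SchottkyData List

variable {r : ℕ}

lemma sq_le_of_abs_le' (x M : ℝ) (h : |x| ≤ M) : x^2 ≤ M^2 := by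
  nlinarith [sq_abs x, abs_nonneg x]

lemma sq_le_of_abs_le_mul (K u v : ℝ) (hK : 0 ≤ K) (huv : 0 < u*v) (h : |u| ≤ K * |v|) :
    u^2 ≤ K*(u*v) := by
  have habsuv : |u| * |v| = u * v := by rw [← abs_mul, abs_of_pos huv]
  calc u^2 = |u| * |u| := by rw [pow_two, ← abs_mul_abs_self]
    _ ≤ (K * |v|) * |u| := mul_le_mul_of_nonneg_right h (abs_nonneg u)
    _ = K * (|u| * |v|) := by ring
    _ = K * (u*v) := by rw [habsuv]

lemma key_dist (M Δ s t p : ℝ) (hM0 : 0 < M) (hΔ0 : 0 < Δ)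
    (hdt : Δ ≤ |t - p|) (hst : |s - t| ≤ 2*M) :
    |s - p| ≤ (1 + 2*M/Δ) * |t - p| := by
  have h1 : |s - p| ≤ |t - p| + |s - t| := by
    have := abs_sub_abs_le_abs_sub (s - p) (t - p)
    rw [show (s - p) - (t - p) = s - t by ring] at this
    linarith
  have h2 : 2*M ≤ (2*M/Δ) * |t - p| := by
    rw [div_mul_eq_mul_div, le_div_iff₀ hΔ0]
    nlinarith
  linarith

lemma sign_aux (c d x0 x1 s t : ℝ)
    (hs0 : x0 ≤ s) (hs1 : s ≤ x1) (ht0 : x0 ≤ t) (ht1 : t ≤ x1)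
    (hroot : ∀ y, x0 ≤ y → y ≤ x1 → c*y + d ≠ 0) :
    0 < (c*s+d)*(c*t+d) := by
  rcases eq_or_ne c 0 with hc | hc
  · have hd : d ≠ 0 := by
      have := hroot s hs0 hs1; rwa [hc, zero_mul, zero_add] at this
    rw [hc]
    simpa using mul_self_pos.mpr hd
  · set p := -d/c with hp
    have hcp : c*p + d = 0 := by rw [hp]; field_simp; ring
    have hpnot : ¬(x0 ≤ p ∧ p ≤ x1) := fun h => hroot p h.1 h.2 hcp
    have hcsq : 0 < c^2 := lt_of_le_of_ne (sq_nonneg _) (Ne.symm (pow_ne_zero 2 hc))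
    have hps : ∀ y : ℝ, c*y + d = c*(y-p) := by
      intro y; rw [hp]; field_simp; ring
    rw [hps s, hps t]
    rcases not_and_or.mp hpnot with h | h
    · push_neg at h
      have h1 : 0 < s - p := by linarith
      have h2 : 0 < t - p := by linarith
      nlinarith [mul_pos hcsq (mul_pos h1 h2)]
    · push_neg at h
      have h1 : s - p < 0 := by linarith
      have h2 : t - p < 0 := by linarith
      nlinarith [mul_pos hcsq (mul_pos_of_neg_of_neg h1 h2)]

lemma comp_aux0 (K u : ℝ) (hK1 : 1 ≤ K) (hu2 : 0 < u*u) : u^2 ≤ K*(u*u) := by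
  nlinarith

lemma comp_aux (M Δ c x0 x1 p u v : ℝ) (hM0 : 0 < M) (hΔ0 : 0 < Δ)
    (hu : u = c*(x0 - p)) (hv : v = c*(x1 - p))
    (hd0 : Δ ≤ |x0 - p|) (hd1 : Δ ≤ |x1 - p|)
    (hx : |x0 - x1| ≤ 2*M) (huv : 0 < u*v) :
    u^2 ≤ (1+2*M/Δ)*(u*v) ∧ v^2 ≤ (1+2*M/Δ)*(u*v) := by
  have hx' : |x1 - x0| ≤ 2*M := by rwa [abs_sub_comm]
  have hK : (0:ℝ) ≤ 1+2*M/Δ := by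
    have : (0:ℝ) ≤ 2*M/Δ := div_nonneg (by linarith) hΔ0.le
    linarith
  constructor
  · apply sq_le_of_abs_le_mul _ _ _ hK huv
    rw [hu, hv, abs_mul, abs_mul]
    have h1 := key_dist M Δ x0 x1 p hM0 hΔ0 hd1 hx
    nlinarith [abs_nonneg c]
  · have hvu : (0:ℝ) < v*u := by rwa [mul_comm] at huv
    have hres : v^2 ≤ (1+2*M/Δ)*(v*u) := by
      apply sq_le_of_abs_le_mul _ _ _ hK hvu
      rw [hu, hv, abs_mul, abs_mul]
      have h1 := key_dist M Δ x1 x0 p hM0 hΔ0 hd0 hx'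
      nlinarith [abs_nonneg c]
    nlinarith [hres]

set_option maxHeartbeats 1000000 in
lemma core (M L K a b c d x0 x1 m0 m1 : ℝ)
    (hM0 : 0 < M) (hL0 : 0 < L) (hK0 : 0 < K)
    (hLx : L ≤ x1 - x0) (hx0sq : x0^2 ≤ M^2)
    (hN0 : a*x0 + b = m0*(c*x0+d)) (hN1 : a*x1 + b = m1*(c*x1+d))
    (hm0sq : m0^2 ≤ M^2) (hm1sq : m1^2 ≤ M^2)
    (huv : 0 < (c*x0+d)*(c*x1+d))
    (hcu : (c*x0+d)^2 ≤ K*((c*x0+d)*(c*x1+d)))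
    (hcv : (c*x1+d)^2 ≤ K*((c*x0+d)*(c*x1+d))) :
    (a^2+b^2+c^2+d^2) * L^2
      ≤ (K*(L^2*(2+2*M^2)+4+12*M^2+8*M^4)) * ((c*x0+d)*(c*x1+d)) := by
  have hLsq : L^2 ≤ (x1-x0)^2 := pow_le_pow_left₀ hL0.le hLx 2
  have hN0sq : (a*x0+b)^2 ≤ M^2*(K*((c*x0+d)*(c*x1+d))) := by
    rw [hN0, mul_pow]
    exact mul_le_mul hm0sq hcu (sq_nonneg _) (sq_nonneg M)
  have hN1sq : (a*x1+b)^2 ≤ M^2*(K*((c*x0+d)*(c*x1+d))) := by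
    rw [hN1, mul_pow]
    exact mul_le_mul hm1sq hcv (sq_nonneg _) (sq_nonneg M)
  set P := (c*x0+d)*(c*x1+d) with hP
  have hcsqb : c^2 * L^2 ≤ 4*K*P := by
    have e2 : c^2 * L^2 ≤ c^2 * (x1-x0)^2 :=
      mul_le_mul_of_nonneg_left hLsq (sq_nonneg _)
    nlinarith [hcu, hcv, sq_nonneg ((c*x0+d)+(c*x1+d))]
  have hasqb : a^2 * L^2 ≤ 4*M^2*K*P := by
    have e2 : a^2 * L^2 ≤ a^2 * (x1-x0)^2 :=
      mul_le_mul_of_nonneg_left hLsq (sq_nonneg _)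
    nlinarith [hN0sq, hN1sq, sq_nonneg ((a*x1+b)+(a*x0+b))]
  have hbsqb : b^2 * L^2 ≤ (2*M^2*K*L^2 + 8*M^4*K)*P := by
    have e1 : b^2 ≤ 2*(a*x0+b)^2 + 2*a^2*x0^2 := by
      nlinarith [sq_nonneg ((a*x0+b) + a*x0)]
    have e1' : b^2*L^2 ≤ 2*(a*x0+b)^2*L^2 + 2*a^2*x0^2*L^2 := by
      nlinarith [e1, sq_nonneg L]
    have e2 : a^2*x0^2*L^2 ≤ M^2*(4*M^2*K*P) := by
      have h1 : a^2*x0^2*L^2 ≤ a^2*M^2*L^2 := by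
        nlinarith [hx0sq, mul_nonneg (sq_nonneg a) (sq_nonneg L)]
      have h3 : M^2*(a^2*L^2) ≤ M^2*(4*M^2*K*P) :=
        mul_le_mul_of_nonneg_left hasqb (sq_nonneg M)
      nlinarith [h1, h3]
    have e3 : (a*x0+b)^2*L^2 ≤ (M^2*(K*P))*L^2 :=
      mul_le_mul_of_nonneg_right hN0sq (sq_nonneg L)
    nlinarith [e1', e2, e3]
  have hdsqb : d^2 * L^2 ≤ (2*K*L^2 + 8*M^2*K)*P := by
    have e1 : d^2 ≤ 2*(c*x0+d)^2 + 2*c^2*x0^2 := by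
      nlinarith [sq_nonneg ((c*x0+d) + c*x0)]
    have e1' : d^2*L^2 ≤ 2*(c*x0+d)^2*L^2 + 2*c^2*x0^2*L^2 := by
      nlinarith [e1, sq_nonneg L]
    have e2 : c^2*x0^2*L^2 ≤ M^2*(4*K*P) := by
      have h1 : c^2*x0^2*L^2 ≤ c^2*M^2*L^2 := by
        nlinarith [hx0sq, mul_nonneg (sq_nonneg c) (sq_nonneg L)]
      have h3 : M^2*(c^2*L^2) ≤ M^2*(4*K*P) :=
        mul_le_mul_of_nonneg_left hcsqb (sq_nonneg M)
      nlinarith [h1, h3]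
    have e3 : (c*x0+d)^2*L^2 ≤ (K*P)*L^2 :=
      mul_le_mul_of_nonneg_right hcu (sq_nonneg L)
    nlinarith [e1', e2, e3]
  nlinarith [hasqb, hbsqb, hcsqb, hdsqb]

lemma upper_uv (M a b c d x0 x1 : ℝ) (hM0 : 0 < M)
    (hx0sq : x0^2 ≤ M^2) (hx1sq : x1^2 ≤ M^2) :
    (c*x0+d)*(c*x1+d) ≤ (a^2+b^2+c^2+d^2)*(1+M^2) := by
  have h1M : (0:ℝ) ≤ 1 + M^2 := by positivity
  have hu2 : (c*x0+d)^2 ≤ (c^2+d^2)*(M^2+1) := by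
    nlinarith [sq_nonneg (c - d*x0), hx0sq, sq_nonneg c, sq_nonneg d]
  have hv2 : (c*x1+d)^2 ≤ (c^2+d^2)*(M^2+1) := by
    nlinarith [sq_nonneg (c - d*x1), hx1sq, sq_nonneg c, sq_nonneg d]
  have hext : (c^2+d^2)*(M^2+1) ≤ (a^2+b^2+c^2+d^2)*(1+M^2) := by
    nlinarith [mul_nonneg (add_nonneg (sq_nonneg a) (sq_nonneg b)) h1M]
  nlinarith [hu2, hv2, hext, sq_nonneg ((c*x0+d)-(c*x1+d))]

end RevAux
end Part4
section Part5
namespace RevAux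
open SchottkyData List

variable {r : ℕ}

set_option maxHeartbeats 1000000 in
lemma lenA (S : SchottkyData r) : ∃ c₁ c₂ : ℝ, 0 < c₁ ∧ 0 < c₂ ∧
    ∀ (l : List (Fin (2 * r))) (hl : l ≠ []), S.IsWord l →
      c₁ / nrm (S.wordγ l.dropLast) ≤ ivlen (S.wordI l) ∧
      ivlen (S.wordI l) ≤ c₂ / nrm (S.wordγ l.dropLast) := by
  obtain ⟨M, Δ, L, hM0, hΔ0, hL0, hM, hΔ, hL⟩ := consts S
  set K : ℝ := 1 + 2*M/Δ with hK
  have hK1 : 1 ≤ K := by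
    have : (0:ℝ) ≤ 2*M/Δ := div_nonneg (by linarith) hΔ0.le
    rw [hK]; linarith
  have hK0 : 0 < K := lt_of_lt_of_le one_pos hK1
  set C₁ : ℝ := K*(L^2*(2+2*M^2)+4+12*M^2+8*M^4) with hC₁
  have hC₁0 : 0 < C₁ := by
    have hin : 0 < L^2*(2+2*M^2)+4+12*M^2+8*M^4 := by positivity
    exact mul_pos hK0 hin
  have h1M : 0 < 1 + M^2 := by positivity
  have hL2 : 0 < L^2 := by positivity
  refine ⟨L/(1+M^2), 2*M*C₁/L^2, div_pos hL0 h1M,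
    div_pos (mul_pos (by linarith) hC₁0) hL2, ?_⟩
  intro l hl hw
  set g := S.wordγ l.dropLast with hg
  set aN := l.getLast hl with haN
  set x0 := S.ξ₀ aN with hx0d
  set x1 := S.ξ₁ aN with hx1d
  have h01 : x0 < x1 := S.hlt aN
  have hIcc := hM aN
  have hall : ∀ x ∈ Icc x0 x1, g 1 0 * x + g 1 1 ≠ 0 :=
    fun x hx => (prep S M Δ hM hΔ l hl hw x hx).1
  have hbnd : ∀ x ∈ Icc x0 x1, |mobius g x| ≤ M :=
    fun x hx => (prep S M Δ hM hΔ l hl hw x hx).2.1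
  have hpol : g 1 0 ≠ 0 → ∀ x ∈ Icc x0 x1, Δ ≤ |x - mobiusPole g| :=
    fun hc x hx => (prep S M Δ hM hΔ l hl hw x hx).2.2 hc
  have hx0m : x0 ∈ Icc x0 x1 := left_mem_Icc.2 h01.le
  have hx1m : x1 ∈ Icc x0 x1 := right_mem_Icc.2 h01.le
  have hx0M : |x0| ≤ M := abs_le.2 ⟨(hIcc hx0m).1, (hIcc hx0m).2⟩
  have hx1M : |x1| ≤ M := abs_le.2 ⟨(hIcc hx1m).1, (hIcc hx1m).2⟩
  have h2M : x1 - x0 ≤ 2*M := by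
    have h1 := (hIcc hx0m).1; have h2 := (hIcc hx1m).2; linarith
  have hLx : L ≤ x1 - x0 := hL aN
  have hps : g 1 0 ≠ 0 → ∀ y : ℝ, g 1 0 * y + g 1 1 = g 1 0 * (y - mobiusPole g) := by
    intro hc y
    rw [mobiusPole]
    field_simp
    ring
  have hsign : ∀ s ∈ Icc x0 x1, ∀ t ∈ Icc x0 x1,
      0 < (g 1 0 * s + g 1 1) * (g 1 0 * t + g 1 1) :=
    fun s hs t ht => sign_aux (g 1 0) (g 1 1) x0 x1 s t hs.1 hs.2 ht.1 ht.2
      (fun y h1 h2 => hall y ⟨h1, h2⟩)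
  have huv : 0 < (g 1 0 * x0 + g 1 1) * (g 1 0 * x1 + g 1 1) := hsign x0 hx0m x1 hx1m
  have hu : g 1 0 * x0 + g 1 1 ≠ 0 := hall x0 hx0m
  have hv : g 1 0 * x1 + g 1 1 ≠ 0 := hall x1 hx1m
  have hcomp : (g 1 0 * x0 + g 1 1)^2 ≤ K*((g 1 0 * x0 + g 1 1)*(g 1 0 * x1 + g 1 1)) ∧
      (g 1 0 * x1 + g 1 1)^2 ≤ K*((g 1 0 * x0 + g 1 1)*(g 1 0 * x1 + g 1 1)) := by
    rcases eq_or_ne (g 1 0) 0 with hc | hc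
    · have huveq : g 1 0 * x0 + g 1 1 = g 1 0 * x1 + g 1 1 := by rw [hc]; ring
      have huu : 0 < (g 1 0 * x0 + g 1 1) * (g 1 0 * x0 + g 1 1) := by
        rw [← huveq] at huv; exact huv
      have h1 := comp_aux0 K (g 1 0 * x0 + g 1 1) hK1 huu
      constructor
      · calc (g 1 0 * x0 + g 1 1)^2
            ≤ K*((g 1 0 * x0 + g 1 1)*(g 1 0 * x0 + g 1 1)) := h1
          _ = K*((g 1 0 * x0 + g 1 1)*(g 1 0 * x1 + g 1 1)) := by rw [← huveq]
      · rw [← huveq]; exact h1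
    · have hu_eq : g 1 0 * x0 + g 1 1 = g 1 0 * (x0 - mobiusPole g) := hps hc x0
      have hv_eq : g 1 0 * x1 + g 1 1 = g 1 0 * (x1 - mobiusPole g) := hps hc x1
      have hd0 : Δ ≤ |x0 - mobiusPole g| := hpol hc x0 hx0m
      have hd1 : Δ ≤ |x1 - mobiusPole g| := hpol hc x1 hx1m
      have hx : |x0 - x1| ≤ 2*M := by
        rw [abs_sub_comm, abs_of_pos (by linarith : (0:ℝ) < x1 - x0)]; exact h2M
      rw [hK]
      exact comp_aux M Δ (g 1 0) x0 x1 (mobiusPole g) _ _ hM0 hΔ0 hu_eq hv_eq hd0 hd1 hx huv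
  have hN0 : g 0 0 * x0 + g 0 1 = mobius g x0 * (g 1 0 * x0 + g 1 1) := by
    rw [mobius, div_mul_cancel₀ _ hu]
  have hN1 : g 0 0 * x1 + g 0 1 = mobius g x1 * (g 1 0 * x1 + g 1 1) := by
    rw [mobius, div_mul_cancel₀ _ hv]
  have hm0sq : (mobius g x0)^2 ≤ M^2 := sq_le_of_abs_le' _ M (hbnd x0 hx0m)
  have hm1sq : (mobius g x1)^2 ≤ M^2 := sq_le_of_abs_le' _ M (hbnd x1 hx1m)
  have hx0sq : x0^2 ≤ M^2 := sq_le_of_abs_le' _ M hx0M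
  have hx1sq : x1^2 ≤ M^2 := sq_le_of_abs_le' _ M hx1M
  have hmain := core M L K (g 0 0) (g 0 1) (g 1 0) (g 1 1) x0 x1
    (mobius g x0) (mobius g x1) hM0 hL0 hK0 hLx hx0sq hN0 hN1 hm0sq hm1sq
    huv hcomp.1 hcomp.2
  rw [← hC₁] at hmain
  have hnrm_eq : nrm g = g 0 0^2 + g 0 1^2 + g 1 0^2 + g 1 1^2 := rfl
  rw [← hnrm_eq] at hmain
  have hupper := upper_uv M (g 0 0) (g 0 1) (g 1 0) (g 1 1) x0 x1 hM0 hx0sq hx1sq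
  rw [← hnrm_eq] at hupper
  have hmono : StrictMonoOn (mobius g) (Icc x0 x1) := by
    intro s hs t ht hst
    have hsub := mobius_sub g s t (hall s hs) (hall t ht)
    have hpos := hsign s hs t ht
    have : 0 < mobius g t - mobius g s := by
      rw [hsub]; exact div_pos (by linarith) hpos
    linarith
  have hfun : mobius g = fun x : ℝ => (g 0 0 * x + g 0 1)/(g 1 0 * x + g 1 1) := rfl
  have hcont : ContinuousOn (mobius g) (Icc x0 x1) := by
    rw [hfun]
    exact ContinuousOn.div (by fun_prop) (by fun_prop) hall
  have himg : mobius g '' Icc x0 x1 = Icc (mobius g x0) (mobius g x1) := by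
    apply Subset.antisymm
    · rintro y ⟨x, hx, rfl⟩
      exact ⟨hmono.monotoneOn hx0m hx hx.1, hmono.monotoneOn hx hx1m hx.2⟩
    · exact intermediate_value_Icc h01.le hcont
  have hmd : mobius g x1 - mobius g x0
      = (x1-x0)/((g 1 0 * x0 + g 1 1)*(g 1 0 * x1 + g 1 1)) := mobius_sub g x0 x1 hu hv
  have hle : mobius g x0 ≤ mobius g x1 := by
    have : 0 ≤ (x1-x0)/((g 1 0 * x0 + g 1 1)*(g 1 0 * x1 + g 1 1)) :=
      le_of_lt (div_pos (by linarith) huv)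
    linarith [hmd]
  have hlen : ivlen (S.wordI l)
      = (x1-x0)/((g 1 0 * x0 + g 1 1)*(g 1 0 * x1 + g 1 1)) := by
    rw [ivlen, SchottkyData.wordI, dif_neg hl]
    rw [show mobius (S.wordγ l.dropLast) '' Icc (S.ξ₀ (l.getLast hl)) (S.ξ₁ (l.getLast hl))
        = mobius g '' Icc x0 x1 from rfl]
    rw [himg, Real.volume_Icc, ENNReal.toReal_ofReal (by linarith), hmd]
  rw [hlen]
  have hnrmpos : 0 < nrm g := nrm_pos g
  constructor
  · rw [div_div]
    exact div_le_div₀ (by linarith) hLx huv (by linarith [hupper])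
  · rw [div_div, div_le_div_iff₀ huv (mul_pos hL2 hnrmpos)]
    have hmain' : L^2*nrm g ≤ C₁*((g 1 0 * x0 + g 1 1)*(g 1 0 * x1 + g 1 1)) := by
      linarith [hmain]
    have hmm := mul_le_mul h2M hmain'
      (mul_nonneg hL2.le hnrmpos.le) (by linarith : (0:ℝ) ≤ 2*M)
    linarith [hmm]

end RevAux
end Part5
section Part6
namespace RevAux
open SchottkyData List

variable {r : ℕ}

lemma dropLast_reverse' {X : Type*} (m : List X) : m.reverse.dropLast = m.tail.reverse := by
  cases m with
  | nil => rfl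
  | cons a t => rw [List.reverse_cons, List.dropLast_concat, List.tail_cons]

lemma nrm_comparisons (S : SchottkyData r) (G : ℝ) (hG : ∀ a, nrm (S.γ a) ≤ G)
    (l : List (Fin (2 * r))) (hl : l ≠ []) :
    nrm (S.wordγ l.dropLast) ≤ G^2 * nrm (S.wordγ l.tail) ∧
    nrm (S.wordγ l.tail) ≤ G^2 * nrm (S.wordγ l.dropLast) := by
  obtain ⟨a, t, rfl⟩ := List.exists_cons_of_ne_nil hl
  have hGpos : 0 < G := lt_of_lt_of_le (nrm_pos (S.γ a)) (hG a)
  set aN := (a :: t).getLast (List.cons_ne_nil a t) with haN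
  have hsplit : (a :: t).dropLast ++ [aN] = a :: t :=
    List.dropLast_append_getLast (List.cons_ne_nil a t)
  have h1 : S.wordγ (a :: t) = S.γ a * S.wordγ t := wordγ_cons S a t
  have h2 : S.wordγ (a :: t) = S.wordγ ((a :: t).dropLast) * S.γ aN := by
    conv_lhs => rw [← hsplit]
    rw [wordγ_append, wordγ_singleton]
  have e1 : S.wordγ t = (S.γ a)⁻¹ * S.wordγ (a :: t) := by rw [h1]; group
  have e2 : S.wordγ ((a :: t).dropLast) = S.wordγ (a :: t) * (S.γ aN)⁻¹ := by
    rw [h2]; group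
  have b2 : nrm (S.wordγ t) ≤ G * nrm (S.wordγ (a :: t)) := by
    rw [e1]
    calc nrm ((S.γ a)⁻¹ * S.wordγ (a :: t))
        ≤ nrm ((S.γ a)⁻¹) * nrm (S.wordγ (a :: t)) := nrm_mul_le _ _
      _ ≤ G * nrm (S.wordγ (a :: t)) := by
          rw [nrm_inv]
          exact mul_le_mul_of_nonneg_right (hG a) (nrm_pos _).le
  have b4 : nrm (S.wordγ (a :: t)) ≤ nrm (S.wordγ ((a :: t).dropLast)) * G := by
    conv_lhs => rw [h2]
    calc nrm (S.wordγ ((a :: t).dropLast) * S.γ aN)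
        ≤ nrm (S.wordγ ((a :: t).dropLast)) * nrm (S.γ aN) := nrm_mul_le _ _
      _ ≤ nrm (S.wordγ ((a :: t).dropLast)) * G :=
          mul_le_mul_of_nonneg_left (hG aN) (nrm_pos _).le
  have b3 : nrm (S.wordγ ((a :: t).dropLast)) ≤ nrm (S.wordγ (a :: t)) * G := by
    conv_lhs => rw [e2]
    calc nrm (S.wordγ (a :: t) * (S.γ aN)⁻¹)
        ≤ nrm (S.wordγ (a :: t)) * nrm ((S.γ aN)⁻¹) := nrm_mul_le _ _
      _ ≤ nrm (S.wordγ (a :: t)) * G := by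
          rw [nrm_inv]
          exact mul_le_mul_of_nonneg_left (hG aN) (nrm_pos _).le
  have b1 : nrm (S.wordγ (a :: t)) ≤ G * nrm (S.wordγ t) := by
    rw [h1]
    calc nrm (S.γ a * S.wordγ t) ≤ nrm (S.γ a) * nrm (S.wordγ t) := nrm_mul_le _ _
      _ ≤ G * nrm (S.wordγ t) := mul_le_mul_of_nonneg_right (hG a) (nrm_pos _).le
  constructor
  · show nrm (S.wordγ ((a :: t).dropLast)) ≤ G^2 * nrm (S.wordγ t)
    nlinarith [b3, b1, nrm_pos (S.wordγ (a :: t)), nrm_pos (S.wordγ t), hGpos]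
  · show nrm (S.wordγ t) ≤ G^2 * nrm (S.wordγ ((a :: t).dropLast))
    nlinarith [b2, b4, nrm_pos (S.wordγ (a :: t)), nrm_pos (S.wordγ ((a :: t).dropLast)), hGpos]

lemma isWord_revbar (S : SchottkyData r) (l : List (Fin (2 * r))) (hw : S.IsWord l) :
    S.IsWord ((l.map bar).reverse) := by
  rw [SchottkyData.IsWord]
  unfold SchottkyData.IsWord List.Chain' at *
  rw [List.isChain_reverse, List.isChain_map]
  refine List.IsChain.imp ?_ hw
  intro a b hab
  show bar a ≠ bar (bar b)
  rw [bar_bar]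
  exact hab.symm

end RevAux
end Part6
noncomputable section

open MeasureTheory Set Real

/-- **Reversal:** there is `C_Γ > 0` depending only on the Schottky data such that
`C_Γ⁻¹|I_𝐚| ≤ |I_{𝐚̄}| ≤ C_Γ|I_𝐚|` for every nonempty word `𝐚`, where
`𝐚̄ = ā_n…ā_1` is the reversed-and-barred word. -/
theorem reversal (r : ℕ) (S : SchottkyData r) :
    ∃ C > (0 : ℝ), ∀ l : List (Fin (2 * r)), l ≠ [] → S.IsWord l →
      C⁻¹ * ivlen (S.wordI l) ≤ ivlen (S.wordI ((l.map bar).reverse)) ∧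
      ivlen (S.wordI ((l.map bar).reverse)) ≤ C * ivlen (S.wordI l) := by
  classical
  obtain ⟨c₁, c₂, hc₁, hc₂, hA⟩ := RevAux.lenA S
  have hne := RevAux.alphabet_nonempty S
  obtain ⟨a₀, ha₀⟩ := Finite.exists_max (fun a => RevAux.nrm (S.γ a))
  set G := RevAux.nrm (S.γ a₀) with hGdef
  have hG : ∀ a, RevAux.nrm (S.γ a) ≤ G := ha₀
  have hGpos : 0 < G := lt_of_lt_of_le (RevAux.nrm_pos _) (hG a₀)
  have hG2 : 0 < G^2 := by positivity
  refine ⟨(c₂*G^2)/c₁, div_pos (mul_pos hc₂ hG2) hc₁, ?_⟩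
  intro l hl hw
  have hlb : (l.map bar).reverse ≠ [] := by
    simp [hl]
  have hwb : S.IsWord ((l.map bar).reverse) := RevAux.isWord_revbar S l hw
  obtain ⟨low1, up1⟩ := hA l hl hw
  obtain ⟨low2, up2⟩ := hA _ hlb hwb
  have hdrop : ((l.map bar).reverse).dropLast = ((l.tail).map bar).reverse := by
    rw [RevAux.dropLast_reverse']
    congr 1
    exact List.map_tail.symm
  have hγb : S.wordγ ((l.map bar).reverse).dropLast = (S.wordγ l.tail)⁻¹ := by
    rw [hdrop]
    exact RevAux.wordγ_revbar S l.tail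
  have hnrm_b : RevAux.nrm (S.wordγ ((l.map bar).reverse).dropLast)
      = RevAux.nrm (S.wordγ l.tail) := by
    rw [hγb, RevAux.nrm_inv]
  rw [hnrm_b] at low2 up2
  have hN1pos : 0 < RevAux.nrm (S.wordγ l.dropLast) := RevAux.nrm_pos _
  have hN2pos : 0 < RevAux.nrm (S.wordγ l.tail) := RevAux.nrm_pos _
  obtain ⟨cmp1, cmp2⟩ := RevAux.nrm_comparisons S G hG l hl
  constructor
  · have h1 : ((c₂*G^2)/c₁)⁻¹ = c₁/(c₂*G^2) := by rw [inv_div]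
    rw [h1]
    have hstep1 : c₁/(c₂*G^2) * ivlen (S.wordI l)
        ≤ c₁/(c₂*G^2) * (c₂/RevAux.nrm (S.wordγ l.dropLast)) :=
      mul_le_mul_of_nonneg_left up1 (le_of_lt (div_pos hc₁ (mul_pos hc₂ hG2)))
    have hstep2 : c₁/(c₂*G^2) * (c₂/RevAux.nrm (S.wordγ l.dropLast))
        = c₁/(G^2*RevAux.nrm (S.wordγ l.dropLast)) := by
      rw [div_mul_div_comm, div_eq_div_iff (by positivity) (by positivity)]
      ring
    have hstep3 : c₁/(G^2*RevAux.nrm (S.wordγ l.dropLast))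
        ≤ c₁/RevAux.nrm (S.wordγ l.tail) := by
      rw [div_le_div_iff₀ (by positivity) hN2pos]
      calc c₁ * RevAux.nrm (S.wordγ l.tail)
          ≤ c₁ * (G^2 * RevAux.nrm (S.wordγ l.dropLast)) :=
            mul_le_mul_of_nonneg_left cmp2 hc₁.le
        _ = c₁ * (G^2 * RevAux.nrm (S.wordγ l.dropLast)) := rfl
    linarith [low2]
  · have hstep3 : c₂/RevAux.nrm (S.wordγ l.tail)
        ≤ c₂*G^2/RevAux.nrm (S.wordγ l.dropLast) := by
      rw [div_le_div_iff₀ hN2pos hN1pos]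
      calc c₂ * RevAux.nrm (S.wordγ l.dropLast)
          ≤ c₂ * (G^2 * RevAux.nrm (S.wordγ l.tail)) :=
            mul_le_mul_of_nonneg_left cmp1 hc₂.le
        _ = c₂*G^2 * RevAux.nrm (S.wordγ l.tail) := by ring
    have hstep4 : c₂*G^2/RevAux.nrm (S.wordγ l.dropLast)
        = (c₂*G^2/c₁)*(c₁/RevAux.nrm (S.wordγ l.dropLast)) := by
      rw [div_mul_div_comm, div_eq_div_iff (by positivity) (by positivity)]
      ring
    have hstep5 : (c₂*G^2/c₁)*(c₁/RevAux.nrm (S.wordγ l.dropLast))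
        ≤ (c₂*G^2/c₁)*ivlen (S.wordI l) :=
      mul_le_mul_of_nonneg_left low1 (div_pos (mul_pos hc₂ hG2) hc₁).le
    linarith

end
end

section
/- There exists a constant C_Γ > 0, depending only on the Schottky data, such that for all nonempty words 𝐚, 𝐛 ∈ W° with 𝐚 ⊀ 𝐛 and 𝐛 ⊀ 𝐚 (neither is a prefix of the other), and all x ∈ I_𝐚, y ∈ I_𝐛: |x − y| ≥ C_Γ^{-1} max(|I_𝐚|, |I_𝐛|). -/
open MeasureTheory Set Real Pointwise

noncomputable section

open MeasureTheory Set Real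


namespace SepAux

lemma mobiusOP_infty (g : SL2) : mobiusOP g OnePoint.infty
    = if g 1 0 = 0 then OnePoint.infty else ((g 0 0 / g 1 0 : ℝ) : OnePoint ℝ) := rfl

lemma mobiusOP_coe (g : SL2) (x : ℝ) : mobiusOP g (x : OnePoint ℝ)
    = if g 1 0 * x + g 1 1 = 0 then OnePoint.infty else ((mobius g x : ℝ) : OnePoint ℝ) := rfl

lemma SL2.mul_entry (g h : SL2) (i j : Fin 2) :
    (g*h) i j = g i 0 * h 0 j + g i 1 * h 1 j := by
  simp [Matrix.SpecialLinearGroup.coe_mul]; rw [Matrix.mul_apply, Fin.sum_univ_two]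

lemma SL2.det1 (g : SL2) : g 0 0 * g 1 1 - g 0 1 * g 1 0 = 1 := by
  have := g.prop; rwa [Matrix.det_fin_two] at this

lemma mobius_one' (x : ℝ) : mobius 1 x = x := by
  simp [mobius, Matrix.SpecialLinearGroup.coe_one]

lemma den_mul (g h : SL2) (x : ℝ) (hd : h 1 0 * x + h 1 1 ≠ 0) :
    (g*h) 1 0 * x + (g*h) 1 1 = (g 1 0 * mobius h x + g 1 1) * (h 1 0 * x + h 1 1) := by
  rw [SL2.mul_entry, SL2.mul_entry, mobius]; field_simp; ring

lemma mobius_mul (g h : SL2) (x : ℝ) (hd : h 1 0 * x + h 1 1 ≠ 0)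
    (hd2 : g 1 0 * mobius h x + g 1 1 ≠ 0) :
    mobius (g*h) x = mobius g (mobius h x) := by
  have hden := den_mul g h x hd
  rw [show mobius (g*h) x = ((g*h) 0 0 * x + (g*h) 0 1)/((g*h) 1 0 * x + (g*h) 1 1) from rfl,
    hden, SL2.mul_entry, SL2.mul_entry,
    show mobius g (mobius h x) = (g 0 0 * mobius h x + g 0 1)/(g 1 0 * mobius h x + g 1 1) from rfl,
    div_eq_div_iff (mul_ne_zero hd2 hd) hd2, mobius]
  field_simp
  ring_nf

lemma mobius_sub (g : SL2) (u v : ℝ) (hu : g 1 0 * u + g 1 1 ≠ 0) (hv : g 1 0 * v + g 1 1 ≠ 0) :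
    mobius g u - mobius g v = (u - v) / ((g 1 0 * u + g 1 1) * (g 1 0 * v + g 1 1)) := by
  have hdet := SL2.det1 g
  rw [mobius, mobius, div_sub_div _ _ hu hv]
  congr 1
  ring_nf
  linear_combination (u - v) * hdet

lemma den_eq_pole (g : SL2) (h : g 1 0 ≠ 0) (u : ℝ) :
    g 1 0 * u + g 1 1 = g 1 0 * (u - mobiusPole g) := by
  rw [mobiusPole]; field_simp; ring

variable {r : ℕ} (S : SchottkyData r)

lemma wordγ_nil : S.wordγ [] = 1 := rfl

lemma wordγ_cons (a : Fin (2*r)) (t : List (Fin (2*r))) :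
    S.wordγ (a :: t) = S.γ a * S.wordγ t := by
  simp [SchottkyData.wordγ]

lemma wordγ_append (c m : List (Fin (2*r))) :
    S.wordγ (c ++ m) = S.wordγ c * S.wordγ m := by
  simp [SchottkyData.wordγ]

lemma disj_mem (a b : Fin (2*r)) (hab : a ≠ b) (x : ℝ)
    (hx : x ∈ Icc (S.ξ₀ a) (S.ξ₁ a)) : x ∉ Ioo (S.ξ₀ b) (S.ξ₁ b) := by
  intro hx'
  exact (S.hdisj a b hab).ne_of_mem hx (Set.mem_of_mem_of_subset hx' Set.Ioo_subset_Icc_self) rfl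

lemma gen_facts (a : Fin (2*r)) :
    S.γ a 1 0 ≠ 0 ∧
    S.γ a 0 0 / S.γ a 1 0 ∈ Icc (S.ξ₀ a) (S.ξ₁ a) ∧
    ∀ x : ℝ, x ∉ Ioo (S.ξ₀ (bar a)) (S.ξ₁ (bar a)) →
      S.γ a 1 0 * x + S.γ a 1 1 ≠ 0 ∧ mobius (S.γ a) x ∈ Icc (S.ξ₀ a) (S.ξ₁ a) := by
  have hdom : (OnePoint.infty : OnePoint ℝ) ∈
      (univ \ ((fun t : ℝ => (t : OnePoint ℝ)) '' Ioo (S.ξ₀ (bar a)) (S.ξ₁ (bar a)))) := by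
    refine ⟨trivial, ?_⟩
    rintro ⟨t, -, ht⟩
    exact OnePoint.coe_ne_infty t ht
  have himg : mobiusOP (S.γ a) OnePoint.infty ∈
      (fun t : ℝ => (t : OnePoint ℝ)) '' Icc (S.ξ₀ a) (S.ξ₁ a) := by
    rw [← S.hmap a]; exact Set.mem_image_of_mem _ hdom
  obtain ⟨t0, ht0I, ht0⟩ := himg
  have hne : S.γ a 1 0 ≠ 0 := by
    intro h0
    rw [mobiusOP_infty, if_pos h0] at ht0
    exact OnePoint.coe_ne_infty t0 ht0
  rw [mobiusOP_infty, if_neg hne] at ht0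
  have ht0' : t0 = S.γ a 0 0 / S.γ a 1 0 := OnePoint.coe_injective ht0
  refine ⟨hne, ht0' ▸ ht0I, ?_⟩
  intro x hx
  have hdomx : ((x : ℝ) : OnePoint ℝ) ∈
      (univ \ ((fun t : ℝ => (t : OnePoint ℝ)) '' Ioo (S.ξ₀ (bar a)) (S.ξ₁ (bar a)))) := by
    refine ⟨trivial, ?_⟩
    rintro ⟨t, htI, ht⟩
    exact hx (OnePoint.coe_injective ht ▸ htI)
  have himgx : mobiusOP (S.γ a) (x : OnePoint ℝ) ∈
      (fun t : ℝ => (t : OnePoint ℝ)) '' Icc (S.ξ₀ a) (S.ξ₁ a) := by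
    rw [← S.hmap a]; exact Set.mem_image_of_mem _ hdomx
  obtain ⟨t1, ht1I, ht1⟩ := himgx
  have hd : S.γ a 1 0 * x + S.γ a 1 1 ≠ 0 := by
    intro h0
    rw [mobiusOP_coe, if_pos h0] at ht1
    exact OnePoint.coe_ne_infty t1 ht1
  rw [mobiusOP_coe, if_neg hd] at ht1
  exact ⟨hd, (OnePoint.coe_injective ht1) ▸ ht1I⟩

lemma wordW : ∀ (l : List (Fin (2*r))) (hd lt : Fin (2*r)), S.IsWord l →
    l.head? = some hd → l.getLast? = some lt →
    (S.wordγ l) 1 0 ≠ 0 ∧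
    (S.wordγ l) 0 0 / (S.wordγ l) 1 0 ∈ Icc (S.ξ₀ hd) (S.ξ₁ hd) ∧
    ∀ x : ℝ, x ∉ Ioo (S.ξ₀ (bar lt)) (S.ξ₁ (bar lt)) →
      (S.wordγ l) 1 0 * x + (S.wordγ l) 1 1 ≠ 0 ∧
      mobius (S.wordγ l) x ∈ Icc (S.ξ₀ hd) (S.ξ₁ hd) := by
  intro l
  induction l with
  | nil => intro hd lt _ h; simp at h
  | cons a t ih =>
    intro hd lt hw hhd hlt
    obtain rfl : a = hd := by simpa using hhd
    cases t with
    | nil =>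
      obtain rfl : a = lt := by simpa using hlt
      have h1 : S.wordγ [a] = S.γ a := by
        rw [wordγ_cons, wordγ_nil, mul_one]
      rw [h1]
      exact gen_facts S a
    | cons b t' =>
      have hw' : S.IsWord (b :: t') := (List.isChain_cons_cons.mp hw).2
      have hba : b ≠ bar a := (List.isChain_cons_cons.mp hw).1
      have hlt2 : (b :: t').getLast? = some lt := by
        rwa [List.getLast?_cons_cons] at hlt
      obtain ⟨hne, hinf, hmaps⟩ := ih b lt hw' rfl hlt2
      set h := S.wordγ (b :: t') with hh
      set g := S.γ a with hg
      have hG : S.wordγ (a :: b :: t') = g * h := wordγ_cons S a (b :: t')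
      set q' : ℝ := h 0 0 / h 1 0 with hq'
      have hq'notin : q' ∉ Ioo (S.ξ₀ (bar a)) (S.ξ₁ (bar a)) :=
        disj_mem S b (bar a) hba q' hinf
      obtain ⟨hgd, hgmem⟩ := (gen_facts S a).2.2 q' hq'notin
      have hG10 : (g * h) 1 0 = h 1 0 * (g 1 0 * q' + g 1 1) := by
        rw [SL2.mul_entry, hq']
        field_simp
      have hG10ne : (g * h) 1 0 ≠ 0 := by
        rw [hG10]; exact mul_ne_zero hne hgd
      have hGinf : (g * h) 0 0 / (g * h) 1 0 = mobius g q' := by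
        have e1 : (g * h) 0 0 = h 1 0 * (g 0 0 * q' + g 0 1) := by
          rw [SL2.mul_entry, hq']
          field_simp
        rw [e1, hG10, show mobius g q' = (g 0 0 * q' + g 0 1)/(g 1 0 * q' + g 1 1) from rfl,
          mul_div_mul_left _ _ hne]
      refine ⟨hG.symm ▸ hG10ne, ?_, ?_⟩
      · rw [hG, hGinf]; exact hgmem
      · intro x hxnot
        obtain ⟨hdh, hmem⟩ := hmaps x hxnot
        have hynot : mobius h x ∉ Ioo (S.ξ₀ (bar a)) (S.ξ₁ (bar a)) :=
          disj_mem S b (bar a) hba _ hmem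
        obtain ⟨hdg, hgmem2⟩ := (gen_facts S a).2.2 _ hynot
        constructor
        · rw [hG, den_mul g h x hdh]
          exact mul_ne_zero hdg hdh
        · rw [hG, mobius_mul g h x hdh hdg]
          exact hgmem2

lemma word_pole (l : List (Fin (2*r))) (lt : Fin (2*r)) (hw : S.IsWord l)
    (hlt : l.getLast? = some lt) (hd : Fin (2*r)) (hhd : l.head? = some hd) :
    mobiusPole (S.wordγ l) ∈ Ioo (S.ξ₀ (bar lt)) (S.ξ₁ (bar lt)) := by
  by_contra hp
  obtain ⟨hne, -, hmaps⟩ := wordW S l hd lt hw hhd hlt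
  have := (hmaps _ hp).1
  apply this
  rw [den_eq_pole _ hne, sub_self, mul_zero]

lemma wordI_eq (l : List (Fin (2*r))) (hl : l ≠ []) (lt : Fin (2*r))
    (hlt : l.getLast? = some lt) :
    S.wordI l = mobius (S.wordγ l.dropLast) '' Icc (S.ξ₀ lt) (S.ξ₁ lt) := by
  have h1 : l.getLast hl = lt := by
    rw [List.getLast?_eq_getLast hl] at hlt
    exact Option.some_injective _ hlt
  rw [SchottkyData.wordI, dif_neg hl, h1]

lemma head_dropLast' {α : Type*} (l : List α) (hd : α) (hh : l.head? = some hd)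
    (hne : l.dropLast ≠ []) : l.dropLast.head? = some hd := by
  cases l with
  | nil => simp at hh
  | cons a t =>
    cases t with
    | nil => simp at hne
    | cons b t' =>
      simp only [List.head?_cons, Option.some.injEq] at hh
      subst hh
      rfl

lemma wordI_subset_head (l : List (Fin (2*r))) (hl : l ≠ []) (hw : S.IsWord l)
    (hd : Fin (2*r)) (hhd : l.head? = some hd) :
    S.wordI l ⊆ Icc (S.ξ₀ hd) (S.ξ₁ hd) := by
  obtain ⟨lt, hlt⟩ : ∃ lt, l.getLast? = some lt := by
    cases h : l.getLast? with
    | none => exact absurd (List.getLast?_eq_none_iff.mp h) hl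
    | some c => exact ⟨c, rfl⟩
  rw [wordI_eq S l hl lt hlt]
  rintro x ⟨u, hu, rfl⟩
  by_cases hdle : l.dropLast = []
  · -- l is a singleton, so hd = lt and wordγ [] = 1
    have hsing : l = [hd] := by
      cases l with
      | nil => simp at hhd
      | cons a t =>
        cases t with
        | nil => simp only [List.head?_cons, Option.some.injEq] at hhd; rw [hhd]
        | cons b t' => simp at hdle
    have hlt' : lt = hd := by
      rw [hsing] at hlt; simpa using hlt.symm
    rw [hdle, wordγ_nil, mobius_one']
    rw [hlt'] at hu
    exact hu
  · -- use wordW on l.dropLast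
    obtain ⟨lt', hlt'⟩ : ∃ lt', l.dropLast.getLast? = some lt' := by
      cases h : l.dropLast.getLast? with
      | none => exact absurd (List.getLast?_eq_none_iff.mp h) hdle
      | some c => exact ⟨c, rfl⟩
    have hdecomp := List.dropLast_append_getLast hl
    have hw2 : (l.dropLast ++ [l.getLast hl]).Chain' (fun p q => q ≠ bar p) := by
      rw [hdecomp]; exact hw
    obtain ⟨hwd, -, hjun⟩ := List.isChain_append.mp hw2
    have hjun' : l.getLast hl ≠ bar lt' := by
      apply hjun lt' _ (l.getLast hl) rfl
      rwa [List.getLast?_eq_getLast hdle] at hlt' ⊢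
    have hglt : l.getLast hl = lt := by
      rw [List.getLast?_eq_getLast hl] at hlt
      exact Option.some_injective _ hlt
    have hunot : u ∉ Ioo (S.ξ₀ (bar lt')) (S.ξ₁ (bar lt')) := by
      apply disj_mem S lt (bar lt') _ u hu
      rw [← hglt]; exact hjun'
    have hhd2 : l.dropLast.head? = some hd := head_dropLast' l hd hhd hdle
    exact ((wordW S l.dropLast hd lt' hwd hhd2 hlt').2.2 u hunot).2

lemma wordI_decomp (c m : List (Fin (2*r))) (hm : m ≠ []) (hw : S.IsWord (c ++ m)) :
    ∀ x ∈ S.wordI (c ++ m), ∃ u ∈ S.wordI m, x = mobius (S.wordγ c) u := by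
  obtain ⟨lt, hlt⟩ : ∃ lt, m.getLast? = some lt := by
    cases h : m.getLast? with
    | none => exact absurd (List.getLast?_eq_none_iff.mp h) hm
    | some e => exact ⟨e, rfl⟩
  obtain ⟨hd, hhd⟩ : ∃ hd, m.head? = some hd := by
    cases h : m.head? with
    | none => exact absurd (List.head?_eq_none_iff.mp h) hm
    | some e => exact ⟨e, rfl⟩
  intro x hx
  have hcm : c ++ m ≠ [] := by simp [hm]
  have hltcm : (c ++ m).getLast? = some lt := by
    rwa [List.getLast?_append_of_ne_nil c hm]
  rw [wordI_eq S (c ++ m) hcm lt hltcm] at hx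
  obtain ⟨u0, hu0, rfl⟩ := hx
  obtain ⟨b, m', rfl⟩ : ∃ b m', m = b :: m' := by
    cases m with
    | nil => exact absurd rfl hm
    | cons b m' => exact ⟨b, m', rfl⟩
  have hb : (b :: m').head? = some b := rfl
  obtain rfl : b = hd := by simpa using hhd
  rw [List.dropLast_append_cons, wordγ_append S c (b :: m').dropLast]
  by_cases hm' : m' = []
  · subst hm'
    obtain rfl : b = lt := by simpa using hlt
    refine ⟨u0, ?_, ?_⟩
    · rw [wordI_eq S [b] (by simp) b rfl]
      refine ⟨u0, hu0, ?_⟩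
      rw [show (S.wordγ (([b] : List (Fin (2*r))).dropLast)) = 1 from rfl]
      exact mobius_one' u0
    · show mobius (S.wordγ c * S.wordγ (([b] : List (Fin (2*r))).dropLast)) u0 = _
      rw [show (S.wordγ (([b] : List (Fin (2*r))).dropLast)) = 1 from rfl, mul_one]
  · obtain ⟨y, m'', rfl⟩ : ∃ y m'', m' = y :: m'' := by
      cases m' with
      | nil => exact absurd rfl hm'
      | cons y m'' => exact ⟨y, m'', rfl⟩
    set m : List (Fin (2*r)) := b :: y :: m'' with hm0
    set D : List (Fin (2*r)) := m.dropLast with hD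
    have hDne : D ≠ [] := by rw [hD, hm0, List.dropLast_cons₂]; simp
    obtain ⟨ltD, hltD⟩ : ∃ ltD, D.getLast? = some ltD := by
      cases h : D.getLast? with
      | none => exact absurd (List.getLast?_eq_none_iff.mp h) hDne
      | some e => exact ⟨e, rfl⟩
    have hheadD : D.head? = some b := by rw [hD, hm0, List.dropLast_cons₂]; rfl
    have hwm : S.IsWord m := (List.isChain_append.mp hw).2.1
    have hglm : m.getLast (by simp [hm0]) = lt := by
      have := hlt
      rw [List.getLast?_eq_getLast (by simp [hm0])] at this
      exact Option.some_injective _ this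
    have hw2 : (D ++ [m.getLast (by simp [hm0])]).Chain' (fun p q => q ≠ bar p) := by
      rw [hD, List.dropLast_append_getLast]; exact hwm
    obtain ⟨hwD, -, hjunD⟩ := List.isChain_append.mp hw2
    have hjun' : lt ≠ bar ltD := by
      rw [← hglm]
      exact hjunD ltD hltD (m.getLast (by simp [hm0])) rfl
    have hu0not : u0 ∉ Ioo (S.ξ₀ (bar ltD)) (S.ξ₁ (bar ltD)) :=
      disj_mem S lt (bar ltD) hjun' u0 hu0
    obtain ⟨hdenD, humem⟩ := (wordW S D b ltD hwD hheadD hltD).2.2 u0 hu0not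
    refine ⟨mobius (S.wordγ D) u0, ?_, ?_⟩
    · rw [wordI_eq S m (by simp [hm0]) lt hlt]
      exact ⟨u0, hu0, rfl⟩
    · by_cases hc : c = []
      · subst hc
        rw [wordγ_nil, one_mul, mobius_one']
      · obtain ⟨hc0, hhc0⟩ : ∃ hc0, c.head? = some hc0 := by
          cases h : c.head? with
          | none => exact absurd (List.head?_eq_none_iff.mp h) hc
          | some e => exact ⟨e, rfl⟩
        obtain ⟨gc, hgc⟩ : ∃ gc, c.getLast? = some gc := by
          cases h : c.getLast? with
          | none => exact absurd (List.getLast?_eq_none_iff.mp h) hc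
          | some e => exact ⟨e, rfl⟩
        have hjc : b ≠ bar gc := by
          refine (List.isChain_append.mp hw).2.2 gc hgc b ?_
          rw [hm0]; rfl
        have hunot : mobius (S.wordγ D) u0 ∉ Ioo (S.ξ₀ (bar gc)) (S.ξ₁ (bar gc)) :=
          disj_mem S b (bar gc) hjc _ humem
        have hdenc := ((wordW S c hc0 gc (List.isChain_append.mp hw).1 hhc0 hgc).2.2 _ hunot).1
        exact mobius_mul (S.wordγ c) (S.wordγ D) u0 hdenD hdenc

lemma ivlen_le_of_pairwise (s : Set ℝ) (B : ℝ) (hB : 0 ≤ B)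
    (h : ∀ u ∈ s, ∀ v ∈ s, |u - v| ≤ B) : ivlen s ≤ 2*B := by
  rcases s.eq_empty_or_nonempty with rfl | ⟨w, hw⟩
  · simp only [ivlen, measure_empty, ENNReal.toReal_zero]
    linarith
  · have hsub : s ⊆ Icc (w - B) (w + B) := by
      intro u hu
      have h2 := abs_le.mp (h u hu w hw)
      exact ⟨by linarith [h2.1], by linarith [h2.2]⟩
    have h1 : volume s ≤ volume (Icc (w - B) (w + B)) := measure_mono hsub
    rw [Real.volume_Icc] at h1
    have h2 : (volume s).toReal ≤ (ENNReal.ofReal (w + B - (w - B))).toReal :=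
      ENNReal.toReal_mono (by simp) h1
    rw [ENNReal.toReal_ofReal (by linarith)] at h2
    calc ivlen s ≤ w + B - (w - B) := h2
      _ = 2*B := by ring

lemma prefix_split {α : Type*} : ∀ (l m : List α), ¬ l <+: m → ¬ m <+: l →
    ∃ c a b l' m', a ≠ b ∧ l = c ++ a :: l' ∧ m = c ++ b :: m'
  | [], m, h1, _ => absurd (List.nil_prefix) h1
  | l, [], _, h2 => absurd (List.nil_prefix) h2
  | x::l, y::m, h1, h2 => by
    by_cases hxy : x = y
    · subst hxy
      have h1' : ¬ l <+: m := fun h => h1 (List.cons_prefix_cons.mpr ⟨rfl, h⟩)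
      have h2' : ¬ m <+: l := fun h => h2 (List.cons_prefix_cons.mpr ⟨rfl, h⟩)
      obtain ⟨c, a, b, l', m', hab, rfl, rfl⟩ := prefix_split l m h1' h2'
      exact ⟨x::c, a, b, l', m', hab, rfl, rfl⟩
    · exact ⟨[], x, y, l, m, hxy, rfl, rfl⟩

def gapv (a b : Fin (2*r)) : ℝ :=
  if S.ξ₁ a ≤ S.ξ₀ b then S.ξ₀ b - S.ξ₁ a else S.ξ₀ a - S.ξ₁ b

lemma gap_sep (a b : Fin (2*r)) (hab : a ≠ b) :
    0 < gapv S a b ∧ ∀ u ∈ Icc (S.ξ₀ a) (S.ξ₁ a), ∀ v ∈ Icc (S.ξ₀ b) (S.ξ₁ b),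
      gapv S a b ≤ |u - v| := by
  have hdj := S.hdisj a b hab
  have h1 := S.hlt a
  have h2 := S.hlt b
  have hcase : S.ξ₁ a < S.ξ₀ b ∨ S.ξ₁ b < S.ξ₀ a := by
    by_contra hcon
    push_neg at hcon
    have hm1 : max (S.ξ₀ a) (S.ξ₀ b) ∈ Icc (S.ξ₀ a) (S.ξ₁ a) :=
      ⟨le_max_left _ _, max_le h1.le hcon.1⟩
    have hm2 : max (S.ξ₀ a) (S.ξ₀ b) ∈ Icc (S.ξ₀ b) (S.ξ₁ b) :=
      ⟨le_max_right _ _, max_le hcon.2 h2.le⟩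
    exact hdj.ne_of_mem hm1 hm2 rfl
  rcases hcase with hc | hc
  · rw [gapv, if_pos hc.le]
    refine ⟨by linarith, ?_⟩
    intro u hu v hv
    have : S.ξ₀ b - S.ξ₁ a ≤ v - u := by
      have := hu.2; have := hv.1; linarith
    rw [abs_sub_comm]
    exact le_trans this (le_abs_self _)
  · have hnot : ¬ (S.ξ₁ a ≤ S.ξ₀ b) := by linarith
    rw [gapv, if_neg hnot]
    refine ⟨by linarith, ?_⟩
    intro u hu v hv
    have : S.ξ₀ a - S.ξ₁ b ≤ u - v := by
      have := hu.1; have := hv.2; linarith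
    exact le_trans this (le_abs_self _)

end SepAux

/-- **Separation:** there is `C_Γ > 0` depending only on the Schottky data such that if
neither of the nonempty words `𝐚, 𝐛` is a prefix of the other, then
`|x − y| ≥ C_Γ⁻¹ max(|I_𝐚|, |I_𝐛|)` for all `x ∈ I_𝐚`, `y ∈ I_𝐛`. -/
theorem separation (r : ℕ) (S : SchottkyData r) :
    ∃ C > (0 : ℝ), ∀ l m : List (Fin (2 * r)), l ≠ [] → m ≠ [] →
      S.IsWord l → S.IsWord m → ¬ l <+: m → ¬ m <+: l →
      ∀ x ∈ S.wordI l, ∀ y ∈ S.wordI m,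
        C⁻¹ * max (ivlen (S.wordI l)) (ivlen (S.wordI m)) ≤ |x - y| := by
  classical
  open SepAux in
  have hrpos : 0 < 2*r := by have := S.hr; omega
  have hr1 : (1:ℕ) < 2*r := by have := S.hr; omega
  -- the constants
  have hAne : (Finset.univ : Finset (Fin (2*r))).Nonempty := ⟨⟨0, hrpos⟩, Finset.mem_univ _⟩
  set L : ℝ := Finset.univ.sup' hAne (fun a => S.ξ₁ a - S.ξ₀ a) with hLdef
  have hLle : ∀ a, S.ξ₁ a - S.ξ₀ a ≤ L := by
    intro a; rw [hLdef]
    exact Finset.le_sup' (fun a => S.ξ₁ a - S.ξ₀ a) (Finset.mem_univ a)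
  have hLpos : 0 < L :=
    lt_of_lt_of_le (sub_pos.mpr (S.hlt ⟨0, hrpos⟩)) (hLle ⟨0, hrpos⟩)
  set M : ℝ := Finset.univ.sup' hAne (fun a => max |S.ξ₀ a| |S.ξ₁ a|) with hMdef
  have hMle : ∀ a, max |S.ξ₀ a| |S.ξ₁ a| ≤ M := by
    intro a; rw [hMdef]
    exact Finset.le_sup' (fun a => max |S.ξ₀ a| |S.ξ₁ a|) (Finset.mem_univ a)
  have hM : ∀ a, ∀ u ∈ Icc (S.ξ₀ a) (S.ξ₁ a), |u| ≤ M := by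
    intro a u hu
    obtain ⟨h1, h2⟩ := hu
    have h3 := hMle a
    have h4 : |S.ξ₀ a| ≤ M := le_trans (le_max_left _ _) h3
    have h5 : |S.ξ₁ a| ≤ M := le_trans (le_max_right _ _) h3
    rw [abs_le]
    constructor
    · have := neg_abs_le (S.ξ₀ a); linarith
    · have := le_abs_self (S.ξ₁ a); linarith
  have hMpos : 0 < M := by
    have h3 := hMle ⟨0, hrpos⟩
    have h1 := S.hlt ⟨0, hrpos⟩
    have h4 := neg_abs_le (S.ξ₀ (⟨0, hrpos⟩ : Fin (2*r)))
    have h5 := le_abs_self (S.ξ₁ (⟨0, hrpos⟩ : Fin (2*r)))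
    have := le_max_left |S.ξ₀ (⟨0, hrpos⟩ : Fin (2*r))| |S.ξ₁ (⟨0, hrpos⟩ : Fin (2*r))|
    have := le_max_right |S.ξ₀ (⟨0, hrpos⟩ : Fin (2*r))| |S.ξ₁ (⟨0, hrpos⟩ : Fin (2*r))|
    by_contra hcon
    push_neg at hcon
    linarith
  have hPne : (Finset.univ.filter fun p : Fin (2*r) × Fin (2*r) => p.1 ≠ p.2).Nonempty := by
    refine ⟨(⟨0, hrpos⟩, ⟨1, hr1⟩), Finset.mem_filter.mpr ⟨Finset.mem_univ _, ?_⟩⟩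
    simp [Fin.ext_iff]
  set g0 : ℝ := (Finset.univ.filter fun p : Fin (2*r) × Fin (2*r) => p.1 ≠ p.2).inf' hPne
    (fun p => gapv S p.1 p.2) with hg0def
  have hg0pos : 0 < g0 := by
    rw [hg0def, Finset.lt_inf'_iff]
    intro p hp
    exact (gap_sep S p.1 p.2 (Finset.mem_filter.mp hp).2).1
  have hsep : ∀ a b : Fin (2*r), a ≠ b → ∀ u ∈ Icc (S.ξ₀ a) (S.ξ₁ a),
      ∀ v ∈ Icc (S.ξ₀ b) (S.ξ₁ b), g0 ≤ |u - v| := by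
    intro a b hab u hu v hv
    have h1 : g0 ≤ gapv S a b := by
      rw [hg0def]
      exact Finset.inf'_le _ (Finset.mem_filter.mpr ⟨Finset.mem_univ (a, b), hab⟩)
    exact le_trans h1 ((gap_sep S a b hab).2 u hu v hv)
  set C : ℝ := max (2*L/g0) (8*M^2*L/g0^3) with hCdef
  have hCpos : 0 < C := lt_of_lt_of_le (by positivity) (le_max_left _ _)
  refine ⟨C, hCpos, ?_⟩
  intro l m hl hm hwl hwm hnp1 hnp2 x hx y hy
  obtain ⟨c, a, b, l', m', hab, rfl, rfl⟩ := prefix_split l m hnp1 hnp2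
  have hwal : S.IsWord (a :: l') := (List.isChain_append.mp hwl).2.1
  have hwbm : S.IsWord (b :: m') := (List.isChain_append.mp hwm).2.1
  have hIa : S.wordI (a :: l') ⊆ Icc (S.ξ₀ a) (S.ξ₁ a) :=
    wordI_subset_head S _ (by simp) hwal a rfl
  have hIb : S.wordI (b :: m') ⊆ Icc (S.ξ₀ b) (S.ξ₁ b) :=
    wordI_subset_head S _ (by simp) hwbm b rfl
  have hdecl : ∀ z ∈ S.wordI (c ++ a :: l'), ∃ u ∈ Icc (S.ξ₀ a) (S.ξ₁ a),
      z = mobius (S.wordγ c) u := by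
    intro z hz
    obtain ⟨u, hu, hz'⟩ := wordI_decomp S c (a :: l') (by simp) hwl z hz
    exact ⟨u, hIa hu, hz'⟩
  have hdecm : ∀ z ∈ S.wordI (c ++ b :: m'), ∃ u ∈ Icc (S.ξ₀ b) (S.ξ₁ b),
      z = mobius (S.wordγ c) u := by
    intro z hz
    obtain ⟨u, hu, hz'⟩ := wordI_decomp S c (b :: m') (by simp) hwm z hz
    exact ⟨u, hIb hu, hz'⟩
  have hivnonneg1 : 0 ≤ ivlen (S.wordI (c ++ a :: l')) := ENNReal.toReal_nonneg
  have hivnonneg2 : 0 ≤ ivlen (S.wordI (c ++ b :: m')) := ENNReal.toReal_nonneg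
  obtain ⟨u, hu, rfl⟩ := hdecl x hx
  obtain ⟨v, hv, rfl⟩ := hdecm y hy
  by_cases hc : c = []
  · -- empty common prefix
    subst hc
    have hxu : mobius (S.wordγ []) u = u := mobius_one' u
    have hyv : mobius (S.wordγ []) v = v := mobius_one' v
    rw [hxu, hyv]
    have hg0uv : g0 ≤ |u - v| := hsep a b hab u hu v hv
    have hivl : ivlen (S.wordI ([] ++ a :: l')) ≤ 2*L := by
      apply ivlen_le_of_pairwise _ _ hLpos.le
      intro z1 hz1 z2 hz2
      obtain ⟨u1, hu1, rfl⟩ := hdecl z1 hz1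
      obtain ⟨u2, hu2, rfl⟩ := hdecl z2 hz2
      have e1 : mobius (S.wordγ []) u1 = u1 := mobius_one' u1
      have e2 : mobius (S.wordγ []) u2 = u2 := mobius_one' u2
      rw [e1, e2, abs_le]
      have := hLle a
      constructor
      · have := hu1.1; have := hu2.2; linarith
      · have := hu1.2; have := hu2.1; linarith
    have hivm : ivlen (S.wordI ([] ++ b :: m')) ≤ 2*L := by
      apply ivlen_le_of_pairwise _ _ hLpos.le
      intro z1 hz1 z2 hz2
      obtain ⟨u1, hu1, rfl⟩ := hdecm z1 hz1
      obtain ⟨u2, hu2, rfl⟩ := hdecm z2 hz2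
      have e1 : mobius (S.wordγ []) u1 = u1 := mobius_one' u1
      have e2 : mobius (S.wordγ []) u2 = u2 := mobius_one' u2
      rw [e1, e2, abs_le]
      have := hLle b
      constructor
      · have := hu1.1; have := hu2.2; linarith
      · have := hu1.2; have := hu2.1; linarith
    have hCinv : C⁻¹ ≤ g0/(2*L) := by
      rw [show g0/(2*L) = (2*L/g0)⁻¹ by rw [inv_div]]
      exact inv_anti₀ (by positivity) (le_max_left _ _)
    calc C⁻¹ * max (ivlen (S.wordI ([] ++ a :: l'))) (ivlen (S.wordI ([] ++ b :: m')))
        ≤ (g0/(2*L)) * (2*L) := by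
          apply mul_le_mul hCinv (max_le hivl hivm) (le_max_iff.mpr (Or.inl hivnonneg1))
          positivity
      _ = g0 := by field_simp
      _ ≤ |u - v| := hg0uv
  · -- nonempty common prefix
    obtain ⟨hc0, hhc0⟩ : ∃ hc0, c.head? = some hc0 := by
      cases h : c.head? with
      | none => exact absurd (List.head?_eq_none_iff.mp h) hc
      | some e => exact ⟨e, rfl⟩
    obtain ⟨gc, hgc⟩ : ∃ gc, c.getLast? = some gc := by
      cases h : c.getLast? with
      | none => exact absurd (List.getLast?_eq_none_iff.mp h) hc
      | some e => exact ⟨e, rfl⟩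
    have hwc : S.IsWord c := (List.isChain_append.mp hwl).1
    set g : SL2 := S.wordγ c with hgdef
    have hqne : g 1 0 ≠ 0 := (wordW S c hc0 gc hwc hhc0 hgc).1
    set Q : ℝ := |g 1 0| with hQdef
    have hQpos : 0 < Q := abs_pos.mpr hqne
    set p : ℝ := mobiusPole g with hpdef
    have hp : p ∈ Icc (S.ξ₀ (bar gc)) (S.ξ₁ (bar gc)) :=
      Ioo_subset_Icc_self (word_pole S c gc hwc hgc hc0 hhc0)
    have hja : a ≠ bar gc :=
      (List.isChain_append.mp hwl).2.2 gc hgc a rfl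
    have hjb : b ≠ bar gc :=
      (List.isChain_append.mp hwm).2.2 gc hgc b rfl
    have key : ∀ (e : Fin (2*r)), e ≠ bar gc → ∀ w ∈ Icc (S.ξ₀ e) (S.ξ₁ e),
        (g 1 0 * w + g 1 1 ≠ 0) ∧ Q * g0 ≤ |g 1 0 * w + g 1 1| ∧
        |g 1 0 * w + g 1 1| ≤ Q * (2*M) := by
      intro e he w hw
      have hden := ((wordW S c hc0 gc hwc hhc0 hgc).2.2 w
        (disj_mem S e (bar gc) he w hw)).1
      have habs : |g 1 0 * w + g 1 1| = Q * |w - p| := by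
        rw [den_eq_pole g hqne w, abs_mul]
      have hlow : g0 ≤ |w - p| := hsep e (bar gc) he w hw p hp
      have hhigh : |w - p| ≤ 2*M := by
        have h1 := hM e w hw
        have h2 := hM (bar gc) p hp
        have h3 : |w - p| ≤ |w| + |p| := by
          have := abs_add_le w (-p)
          rw [abs_neg] at this
          simpa [sub_eq_add_neg] using this
        linarith
      refine ⟨hden, ?_, ?_⟩
      · rw [habs]; exact mul_le_mul_of_nonneg_left hlow hQpos.le
      · rw [habs]; exact mul_le_mul_of_nonneg_left hhigh hQpos.le
    obtain ⟨hdu, hdu1, hdu2⟩ := key a hja u hu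
    obtain ⟨hdv, hdv1, hdv2⟩ := key b hjb v hv
    have hdisp : ∀ w1 w2 : ℝ, g 1 0 * w1 + g 1 1 ≠ 0 → g 1 0 * w2 + g 1 1 ≠ 0 →
        |mobius g w1 - mobius g w2| = |w1 - w2| / (|g 1 0 * w1 + g 1 1| * |g 1 0 * w2 + g 1 1|) := by
      intro w1 w2 h1 h2
      rw [mobius_sub g w1 w2 h1 h2, abs_div, abs_mul]
    -- lower bound on |x - y|
    have hlower : g0 / (Q*(2*M)*(Q*(2*M))) ≤ |mobius g u - mobius g v| := by
      rw [hdisp u v hdu hdv]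
      have hg0uv : g0 ≤ |u - v| := hsep a b hab u hu v hv
      have hd1 : (0:ℝ) < |g 1 0 * u + g 1 1| * |g 1 0 * v + g 1 1| := by
        apply mul_pos (abs_pos.mpr hdu) (abs_pos.mpr hdv)
      have hd2 : |g 1 0 * u + g 1 1| * |g 1 0 * v + g 1 1| ≤ Q*(2*M)*(Q*(2*M)) := by
        apply mul_le_mul hdu2 hdv2 (abs_nonneg _) (by positivity)
      exact div_le_div₀ (abs_nonneg _) hg0uv hd1 hd2
    -- upper bounds on interval lengths
    have hivl : ivlen (S.wordI (c ++ a :: l')) ≤ 2*(L / (Q*g0*(Q*g0))) := by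
      apply ivlen_le_of_pairwise _ _ (by positivity)
      intro z1 hz1 z2 hz2
      obtain ⟨u1, hu1, rfl⟩ := hdecl z1 hz1
      obtain ⟨u2, hu2, rfl⟩ := hdecl z2 hz2
      obtain ⟨hd1, hd1l, -⟩ := key a hja u1 hu1
      obtain ⟨hd2, hd2l, -⟩ := key a hja u2 hu2
      rw [hdisp u1 u2 hd1 hd2]
      apply div_le_div₀ hLpos.le
      · rw [abs_le]
        have := hLle a
        constructor
        · have := hu1.1; have := hu2.2; linarith
        · have := hu1.2; have := hu2.1; linarith
      · positivity
      · apply mul_le_mul hd1l hd2l (by positivity) (abs_nonneg _)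
    have hivm : ivlen (S.wordI (c ++ b :: m')) ≤ 2*(L / (Q*g0*(Q*g0))) := by
      apply ivlen_le_of_pairwise _ _ (by positivity)
      intro z1 hz1 z2 hz2
      obtain ⟨u1, hu1, rfl⟩ := hdecm z1 hz1
      obtain ⟨u2, hu2, rfl⟩ := hdecm z2 hz2
      obtain ⟨hd1, hd1l, -⟩ := key b hjb u1 hu1
      obtain ⟨hd2, hd2l, -⟩ := key b hjb u2 hu2
      rw [hdisp u1 u2 hd1 hd2]
      apply div_le_div₀ hLpos.le
      · rw [abs_le]
        have := hLle b
        constructor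
        · have := hu1.1; have := hu2.2; linarith
        · have := hu1.2; have := hu2.1; linarith
      · positivity
      · apply mul_le_mul hd1l hd2l (by positivity) (abs_nonneg _)
    have hCinv : C⁻¹ ≤ g0^3/(8*M^2*L) := by
      rw [show g0^3/(8*M^2*L) = (8*M^2*L/g0^3)⁻¹ by rw [inv_div]]
      exact inv_anti₀ (by positivity) (le_max_right _ _)
    calc C⁻¹ * max (ivlen (S.wordI (c ++ a :: l'))) (ivlen (S.wordI (c ++ b :: m')))
        ≤ (g0^3/(8*M^2*L)) * (2*(L / (Q*g0*(Q*g0)))) := by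
          apply mul_le_mul hCinv (max_le hivl hivm) (le_max_iff.mpr (Or.inl hivnonneg1))
          positivity
      _ = g0 / (Q*(2*M)*(Q*(2*M))) := by
          field_simp
          ring
      _ ≤ |mobius g u - mobius g v| := hlower

end
end
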